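/- arXiv:1804.10260 — 4 statements merged into one kernel-verified Lean document; each statement's English description precedes it below -/
import Mathlib

section
/- Let d ≥ 3, n ≥ 1, X ⊂ (ℤ^d)^{n−1}, and let K_1,…,K_n each be of the form ∇_i(−Δ)^{−1}∇_{i'}^*. Suppose M : ℤ^d × ℤ^d → [0,∞) is a function such that for every choice of functions b_1,…,b_n : ℤ^d → ℂ with ‖b_j‖_∞ ≤ 1, the kernels K^j(x,y) := K_j(x−y) b_j(y) satisfy |T^n_X(x_0,x_n)| ≤ M(x_0,x_n). Then |f_X(x_0,x_n)| ≤ 2^n M(x_0,x_n) for all x_0, x_n ∈ ℤ^d. -/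
open MeasureTheory ProbabilityTheory
open scoped ENNReal NNReal BigOperators

noncomputable section

/-- The lattice `ℤ^d`. -/
abbrev V (d : ℕ) := Fin d → ℤ

/-- Euclidean norm of a lattice point. -/
def znorm {d : ℕ} (x : V d) : ℝ := Real.sqrt (∑ i, ((x i : ℝ)) ^ 2)

/-- Japanese bracket `⟨x⟩ = 1 + |x|`. -/
def jap {d : ℕ} (x : V d) : ℝ := 1 + znorm x

/-- The `j`-th standard unit vector. -/
def unitVec (d : ℕ) (j : Fin d) : V d := fun k => if k = j then 1 else 0

/-- Discrete derivative `∇_j u(x) = u(x+e_j) - u(x)`. -/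
def grad {d : ℕ} (j : Fin d) (u : V d → ℂ) : V d → ℂ := fun x =>
  u (x + unitVec d j) - u x

/-- Adjoint discrete derivative `∇_j^* u(x) = u(x-e_j) - u(x)`. -/
def gradStar {d : ℕ} (j : Fin d) (u : V d → ℂ) : V d → ℂ := fun x =>
  u (x - unitVec d j) - u x

/-- Negative discrete Laplacian `-Δ = ∑_j ∇_j^* ∇_j`. -/
def negLap {d : ℕ} (u : V d → ℂ) : V d → ℂ := fun x => ∑ j, gradStar j (grad j u) x

/-- Iterated discrete derivative `∇_j^k`. -/
def gradPow {d : ℕ} (j : Fin d) : ℕ → (V d → ℂ) → V d → ℂ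
  | 0 => fun u => u
  | k + 1 => fun u => grad j (gradPow j k u)

/-- Multi-index discrete derivative `∇^α = ∇_1^{α_1} ⋯ ∇_d^{α_d}`. -/
def gradMulti {d : ℕ} (α : Fin d → ℕ) (u : V d → ℂ) : V d → ℂ :=
  ((List.ofFn fun j : Fin d => (gradPow j (α j) : (V d → ℂ) → V d → ℂ)).foldr
      (fun F G => F ∘ G) id) u

/-- The box `[-π,π]^d`. -/
def piBox (d : ℕ) : Set (Fin d → ℝ) := Set.univ.pi fun _ => Set.Icc (-Real.pi) Real.pi

/-- Convolution kernel of the singular integral operator `∇_i (-Δ)^{-1} ∇_{i'}^*`. -/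
def sioKernel (d : ℕ) (i i' : Fin d) (x : V d) : ℂ :=
  (2 * Real.pi : ℂ) ^ (-(d : ℤ)) *
    ∫ θ in piBox d,
      (Complex.exp (Complex.I * (θ i : ℂ)) - 1) *
        (Complex.exp (-(Complex.I * (θ i' : ℂ))) - 1) *
        ((((∑ j, 2 * (1 - Real.cos (θ j))) : ℝ)⁻¹ : ℂ)) *
        Complex.exp (Complex.I * ((∑ j, θ j * (x j : ℝ) : ℝ) : ℂ))

/-- The full path `x_0, x_1, …, x_{n-1}, x_n` determined by endpoints `x_0, x_n` and
interior points `y = (x_1, …, x_{n-1})`. -/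
def fullPath {d : ℕ} (n : ℕ) (x0 xn : V d) (y : Fin (n - 1) → V d) (j : ℕ) : V d :=
  if hj : j = 0 then x0 else if h : j < n then y ⟨j - 1, by omega⟩ else xn

/-- The iterated kernel `T^n_S(x_0,x_n)` summed over interior paths in `S`. -/
def Tn {d : ℕ} (n : ℕ) (K : Fin n → V d → V d → ℂ) (S : Set (Fin (n - 1) → V d))
    (x0 xn : V d) : ℂ :=
  ∑' y : S, ∏ j : Fin n,
    K j (fullPath n x0 xn (y : Fin (n - 1) → V d) (j : ℕ))
      (fullPath n x0 xn (y : Fin (n - 1) → V d) ((j : ℕ) + 1))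

/-- Kernels made from convolution kernels `K_j` of the form `∇_i (-Δ)^{-1} ∇_{i'}^*`
multiplied by bounded functions `b_j`: `K^j(x,y) = K_j(x-y) b_j(y)`. -/
def sioK {d : ℕ} (n : ℕ) (idx : Fin n → Fin d × Fin d) (b : Fin n → V d → ℂ) :
    Fin n → V d → V d → ℂ :=
  fun j x y => sioKernel d (idx j).1 (idx j).2 (x - y) * b j y

/-- Nested alternation `σ(x_0)·(I−E)[σ(x_1)·(I−E)[⋯ (I−E)[σ(x_n)]⋯]]` (before the
outermost expectation). -/
def nestFn {Ω : Type*} [MeasurableSpace Ω] {d : ℕ} (P : Measure Ω) (σ : V d → Ω → ℝ) :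
    List (V d) → Ω → ℝ
  | [] => fun _ => 0
  | [x] => fun ω => σ x ω
  | x :: y :: l => fun ω =>
      σ x ω * (nestFn P σ (y :: l) ω - ∫ ω', nestFn P σ (y :: l) ω' ∂P)

/-- `W(x_0,…,x_n) = E[σ(x_0)·(I−E)[σ(x_1)·(I−E)[⋯ (I−E)[σ(x_n)]⋯]]]`. -/
def Wnest {Ω : Type*} [MeasurableSpace Ω] {d : ℕ} (P : Measure Ω) (σ : V d → Ω → ℝ)
    (l : List (V d)) : ℝ := ∫ ω, nestFn P σ l ω ∂P

/-- `f_X(x_0,x_n) = ∑_{x̄ ∈ X} K_1(x_0-x_1)⋯K_n(x_{n-1}-x_n)·W(x_0,…,x_n)`. -/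
def fX {Ω : Type*} [MeasurableSpace Ω] {d : ℕ} (P : Measure Ω) (σ : V d → Ω → ℝ)
    (n : ℕ) (Kc : Fin n → V d → ℂ) (X : Set (Fin (n - 1) → V d)) (x0 xn : V d) : ℂ :=
  ∑' y : X,
    (∏ j : Fin n, Kc j (fullPath n x0 xn (y : Fin (n - 1) → V d) (j : ℕ) -
        fullPath n x0 xn (y : Fin (n - 1) → V d) ((j : ℕ) + 1))) *
      ((Wnest P σ ((List.range (n + 1)).map
          (fullPath n x0 xn (y : Fin (n - 1) → V d))) : ℝ) : ℂ)

/-! ### Sets of paths -/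

/-- `S^m_{j_0}`: paths whose longest segment has dyadic scale `2^m`, first achieved at `j_0`. -/
def Sset {d : ℕ} (n : ℕ) (x0 xn : V d) (m j0 : ℕ) : Set (Fin (n - 1) → V d) :=
  { y | (∀ j < n, znorm (fullPath n x0 xn y j - fullPath n x0 xn y (j + 1)) <
          (2 : ℝ) ^ (m + 1)) ∧
      (2 : ℝ) ^ m ≤ znorm (fullPath n x0 xn y j0 - fullPath n x0 xn y (j0 + 1)) ∧
      (∀ j < j0, znorm (fullPath n x0 xn y j - fullPath n x0 xn y (j + 1)) < (2 : ℝ) ^ m) }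

/-- `S̃^m_{j_0}`: paths in `S^m_{j_0}` with `{x_0,…,x_{j_0}} ∩ {x_{j_0+1},…,x_n} ≠ ∅`. -/
def StildeSet {d : ℕ} (n : ℕ) (x0 xn : V d) (m j0 : ℕ) : Set (Fin (n - 1) → V d) :=
  { y ∈ Sset n x0 xn m j0 |
      ∃ a, a ≤ j0 ∧ ∃ b, j0 < b ∧ b ≤ n ∧ fullPath n x0 xn y a = fullPath n x0 xn y b }

/-- Paths with a coincidence `x_u = x_v`. -/
def coincSet {d : ℕ} (n : ℕ) (x0 xn : V d) (u v : ℕ) : Set (Fin (n - 1) → V d) :=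
  { y | fullPath n x0 xn y u = fullPath n x0 xn y v }

/-- Paths avoiding coincidences between indices in `E` and `F`. -/
def avoidSet {d : ℕ} (n : ℕ) (x0 xn : V d) (E F : Finset ℕ) : Set (Fin (n - 1) → V d) :=
  { y | ∀ u ∈ E, ∀ v ∈ F, fullPath n x0 xn y u ≠ fullPath n x0 xn y v }

/-- Irreducible paths from `x_0` to `x_n`. -/
def irredSet {d : ℕ} (n : ℕ) (x0 xn : V d) : Set (Fin (n - 1) → V d) :=
  { y | ∀ j < n, ∃ a, a ≤ j ∧ ∃ b, j < b ∧ b ≤ n ∧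
      fullPath n x0 xn y a = fullPath n x0 xn y b }

/-- Truncation to paths all of whose segments are shorter than `2^k`. -/
def Xkset {d : ℕ} (n k : ℕ) (x0 xn : V d) : Set (Fin (n - 1) → V d) :=
  { y | ∀ j < n, znorm (fullPath n x0 xn y j - fullPath n x0 xn y (j + 1)) < (2 : ℝ) ^ k }

/-- `V_{i,j} = { x̄ : x_i = x_n, x_j = x_0 }`. -/
def Vset {d : ℕ} (n : ℕ) (x0 xn : V d) (i j : ℕ) : Set (Fin (n - 1) → V d) :=
  { y | fullPath n x0 xn y i = xn ∧ fullPath n x0 xn y j = x0 }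

/-- `V'_{i,j}`. -/
def Vset' {d : ℕ} (n : ℕ) (x0 xn : V d) (i j : ℕ) : Set (Fin (n - 1) → V d) :=
  Vset n x0 xn i j ∩ { y | ∀ l, j < l → l < n → fullPath n x0 xn y l ≠ x0 } ∩
    { y | ∀ l, 1 ≤ l → l < i → fullPath n x0 xn y l ≠ xn }

/-- `S_{k_0}` (second long segment, with minimality condition `(*)`). -/
def SK0set {d : ℕ} (n : ℕ) (x0 xn : V d) (j1 j2 k0 : ℕ) : Set (Fin (n - 1) → V d) :=
  { y | znorm (x0 - xn) / n ≤
        znorm (fullPath n x0 xn y k0 - fullPath n x0 xn y (k0 + 1)) ∧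
      (if k0 < j1 then
        ∀ j < k0, znorm (fullPath n x0 xn y j - fullPath n x0 xn y (j + 1)) <
          znorm (x0 - xn) / n
       else
        (∀ j < j1, znorm (fullPath n x0 xn y j - fullPath n x0 xn y (j + 1)) <
            znorm (x0 - xn) / n) ∧
          ∀ j, j2 ≤ j → j < k0 →
            znorm (fullPath n x0 xn y j - fullPath n x0 xn y (j + 1)) <
              znorm (x0 - xn) / n) }

/-- `S'_{j_0,j_1,j_2}`. -/
def SprimeJ {d : ℕ} (n : ℕ) (x0 xn : V d) (m j0 j1 j2 : ℕ) : Set (Fin (n - 1) → V d) :=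
  (StildeSet n x0 xn m j0 ∩ coincSet n x0 xn j1 j2) \
    ((⋃ j, ⋃ (_ : j < j1), ⋃ j', ⋃ (_ : j0 < j'), ⋃ (_ : j' ≤ n),
        StildeSet n x0 xn m j0 ∩ coincSet n x0 xn j j') ∪
      ⋃ j', ⋃ (_ : j0 < j'), ⋃ (_ : j' < j2),
        StildeSet n x0 xn m j0 ∩ coincSet n x0 xn j1 j')

/-- `S'_{k_0,k_1,k_2}`. -/
def SprimeK {d : ℕ} (n : ℕ) (x0 xn : V d) (k0 k1 k2 : ℕ) : Set (Fin (n - 1) → V d) :=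
  coincSet n x0 xn k1 k2 \
    ((⋃ k, ⋃ (_ : k < k1), ⋃ k', ⋃ (_ : k0 < k'), ⋃ (_ : k' ≤ n), coincSet n x0 xn k k') ∪
      ⋃ k', ⋃ (_ : k0 < k'), ⋃ (_ : k' < k2), coincSet n x0 xn k1 k')

/-- Value of an interior path at an index `u ∈ (0,n)`. -/
def pathVal {d : ℕ} (n : ℕ) (y : Fin (n - 1) → V d) (u : ℕ) : V d :=
  if h : u - 1 < n - 1 then y ⟨u - 1, h⟩ else 0

/-! ### Kernel assumptions -/

/-- Assumption (i): `|K(x,y)| ≤ A ⟨x-y⟩^{-d}`. -/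
def kerBound {d : ℕ} (A : ℝ) (K : V d → V d → ℂ) : Prop :=
  ∀ x y : V d, ‖K x y‖ ≤ A * jap (x - y) ^ (-(d : ℝ))

/-- Adjoint kernel `K^*(x,y) = conj (K(y,x))`. -/
def adjK {d : ℕ} (K : V d → V d → ℂ) : V d → V d → ℂ := fun x y => starRingEnd ℂ (K y x)

/-- Truncation `K_I(x,y) = K(x,y) χ_I(|x-y|)`. -/
def truncD {d : ℕ} (K : V d → V d → ℂ) (I : Set ℝ) : V d → V d → ℂ :=
  fun x y => I.indicator (fun _ => K x y) (znorm (x - y))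

/-- `‖K‖_{ℓ^p → ℓ^p} ≤ C`, formulated on finitely supported functions. -/
def OpNormLE {d : ℕ} (K : V d → V d → ℂ) (p C : ℝ) : Prop :=
  ∀ f : V d → ℂ, (Function.support f).Finite →
    ∑' x : V d, (‖∑' y : V d, K x y * f y‖₊ : ℝ≥0∞) ^ p ≤
      ENNReal.ofReal C ^ p * ∑' x : V d, (‖f x‖₊ : ℝ≥0∞) ^ p

/-- Assumption (ii): `sup_m (‖K_{I_m}‖_{ℓ^p→ℓ^p} + ‖(K_{I_m})^*‖_{ℓ^p→ℓ^p}) ≤ A/(p-1)` for all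
sufficiently small `p > 1`. -/
def kerAssump2 {d : ℕ} (A : ℝ) (K : V d → V d → ℂ) : Prop :=
  ∃ p₀ : ℝ, 1 < p₀ ∧ ∀ p : ℝ, 1 < p → p ≤ p₀ → ∀ m : ℕ,
    ∃ C₁ C₂ : ℝ, 0 ≤ C₁ ∧ 0 ≤ C₂ ∧ C₁ + C₂ ≤ A / (p - 1) ∧
      OpNormLE (truncD K (Set.Ico (0 : ℝ) (2 ^ m))) p C₁ ∧
      OpNormLE (adjK (truncD K (Set.Ico (0 : ℝ) (2 ^ m)))) p C₂

/-- Kernels modified by bounded factors: `e^j_1(x) K^j(x,y) e^j_2(y)`. -/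
def modTn {d : ℕ} (n : ℕ) (K : Fin n → V d → V d → ℂ) (e1 e2 : Fin n → V d → ℂ) :
    Fin n → V d → V d → ℂ :=
  fun j x y => e1 j x * K j x y * e2 j y

/-! ### Operators and function spaces on `ℤ^d` -/

/-- `f ∈ ℓ^2(ℤ^d)`. -/
def Meml2 {d : ℕ} (f : V d → ℂ) : Prop := Summable fun x : V d => ‖f x‖ ^ 2

/-- `f ∈ ℓ^p(ℤ^d)` for a real exponent `p`. -/
def Memlp {d : ℕ} (p : ℝ) (f : V d → ℂ) : Prop := Summable fun x : V d => ‖f x‖ ^ p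

/-- The `ℓ^2` norm. -/
def l2norm {d : ℕ} (f : V d → ℂ) : ℝ := Real.sqrt (∑' x : V d, ‖f x‖ ^ 2)

/-- Convolution kernel of the Fourier multiplier `Λ^{-1}` with symbol
`(∑_j 2(1-cos θ_j))^{-1/2}`. -/
def lamKer (d : ℕ) (x : V d) : ℂ :=
  (2 * Real.pi : ℂ) ^ (-(d : ℤ)) *
    ∫ θ in piBox d,
      (((((∑ j, 2 * (1 - Real.cos (θ j))) : ℝ) ^ (-(1 / 2 : ℝ)) : ℝ)) : ℂ) *
        Complex.exp (Complex.I * ((∑ j, θ j * (x j : ℝ) : ℝ) : ℂ))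

/-- The operator `Λ^{-1}`, as convolution with `lamKer`. -/
def lamInv {d : ℕ} (f : V d → ℂ) : V d → ℂ := fun x => ∑' y : V d, lamKer d (x - y) * f y

/-- `u ∈ H^1(ℤ^d) = Λ^{-1}[ℓ^2(ℤ^d)]`. -/
def InH1 {d : ℕ} (u : V d → ℂ) : Prop := ∃ f, Meml2 f ∧ u = lamInv f

/-- The operator `L = -Δ + δ ∇^* σ ∇ = ∑_j ∇_j^*((1+δσ)∇_j ·)`. -/
def Lop {d : ℕ} (δ : ℝ) (s : V d → ℝ) (u : V d → ℂ) : V d → ℂ := fun x =>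
  ∑ j, ((((1 + δ * s (x - unitVec d j) : ℝ)) : ℂ) * grad j u (x - unitVec d j) -
    (((1 + δ * s x : ℝ)) : ℂ) * grad j u x)

/-- The delta function at the origin. -/
def delta0 (d : ℕ) : V d → ℂ := fun x => if x = 0 then 1 else 0

/-- The right-hand side of Bourgain's representation:
`(1 + δ·E[σ(0)])(-Δ)u + ∑_{i,j} ∇_i^*(K_{i,j} * (∇_j u))`. -/
def LKrep {d : ℕ} {Ω : Type*} [MeasurableSpace Ω] (P : Measure Ω) (σ : V d → Ω → ℝ)
    (δ : ℝ) (K : Fin d → Fin d → V d → ℝ) (u : V d → ℂ) : V d → ℂ := fun x =>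
  (((1 + δ * ∫ ω, σ (0 : V d) ω ∂P : ℝ)) : ℂ) * negLap u x +
    ∑ i, ∑ j,
      gradStar i (fun z => ∑' y : V d, ((K i j y : ℝ) : ℂ) * grad j u (z - y)) x

/-- The Fourier transform `θ ↦ ∑_x K(x) e^{-iθ·x}` of a function on `ℤ^d`. -/
def FTK (d : ℕ) (K : V d → ℝ) (θ : Fin d → ℝ) : ℂ :=
  ∑' x : V d, (K x : ℂ) * Complex.exp (-(Complex.I * ((∑ j, θ j * (x j : ℝ) : ℝ) : ℂ)))

/-- Membership in the Hölder space `C^{2d-1, 1-ε}(𝕋^d)` of the Fourier transform of `Kf`. -/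
def HolderCond (d : ℕ) (ε : ℝ) (Kf : V d → ℝ) : Prop :=
  ContDiff ℝ (2 * d - 1 : ℕ) (FTK d Kf) ∧
    ∃ CH : ℝ≥0, HolderWith CH (1 - ε).toNNReal (iteratedFDeriv ℝ (2 * d - 1) (FTK d Kf))


/-- The hypothesis of the disjointification lemma: the bound `M` holds for all kernels
modified by factors bounded by `1`. -/
def modBound {d : ℕ} (n : ℕ) (K : Fin n → V d → V d → ℂ) (S : Set (Fin (n - 1) → V d))
    (x0 xn : V d) (M : ℝ) : Prop :=
  ∀ e1 e2 : Fin n → V d → ℂ, (∀ j x, ‖e1 j x‖ ≤ 1) → (∀ j x, ‖e2 j x‖ ≤ 1) →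
    ‖Tn n (modTn n K e1 e2) S x0 xn‖ ≤ M

section TransferAux

open MeasureTheory

variable {d : ℕ} {Ωa : Type*} [MeasurableSpace Ωa] (P : Measure Ωa)
  (σ : V d → Ωa → ℝ)

/-- Block-leader index determined by a set of cut positions. -/
def cIdx (S : Finset ℕ) : ℕ → ℕ
  | 0 => 0
  | j + 1 => if j ∈ S then j + 1 else cIdx S j

lemma cIdx_zero (S : Finset ℕ) : cIdx S 0 = 0 := rfl

lemma cIdx_succ (S : Finset ℕ) (j : ℕ) :
    cIdx S (j + 1) = if j ∈ S then j + 1 else cIdx S j := rfl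

lemma cIdx_le (S : Finset ℕ) : ∀ j, cIdx S j ≤ j
  | 0 => le_rfl
  | j + 1 => by
      rw [cIdx_succ]
      split
      · exact le_rfl
      · exact (cIdx_le S j).trans (Nat.le_succ j)

lemma mem_insert_image_succ (S' : Finset ℕ) (j : ℕ) :
    (j + 1 ∈ insert 0 (S'.image (· + 1))) ↔ j ∈ S' := by
  simp only [Finset.mem_insert, Finset.mem_image]
  constructor
  · rintro (h | ⟨a, ha, h⟩)
    · omega
    · have : a = j := by omega
      rwa [this] at ha
  · intro h; exact Or.inr ⟨j, h, rfl⟩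

lemma mem_image_succ (S' : Finset ℕ) (j : ℕ) :
    (j + 1 ∈ S'.image (· + 1)) ↔ j ∈ S' := by
  simp only [Finset.mem_image]
  constructor
  · rintro ⟨a, ha, h⟩
    have : a = j := by omega
    rwa [this] at ha
  · intro h; exact ⟨j, h, rfl⟩

lemma zero_not_mem_image_succ (S' : Finset ℕ) : 0 ∉ S'.image (· + 1) := by
  simp only [Finset.mem_image]
  rintro ⟨a, _, h⟩; omega

lemma cIdx_insert0 (S' : Finset ℕ) : ∀ j,
    cIdx (insert 0 (S'.image (· + 1))) (j + 1) = cIdx S' j + 1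
  | 0 => by simp [cIdx_succ, cIdx_zero]
  | j + 1 => by
      rw [cIdx_succ, cIdx_succ S' j]
      simp only [mem_insert_image_succ]
      by_cases hj : j ∈ S'
      · simp [hj]
      · simp only [hj, if_false]
        exact cIdx_insert0 S' j

lemma cIdx_image (S' : Finset ℕ) : ∀ j,
    cIdx (S'.image (· + 1)) (j + 1) = if cIdx S' j = 0 then 0 else cIdx S' j + 1
  | 0 => by
      rw [cIdx_succ]
      simp [zero_not_mem_image_succ, cIdx_zero]
  | j + 1 => by
      rw [cIdx_succ, cIdx_succ S' j]
      simp only [mem_image_succ]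
      by_cases hj : j ∈ S'
      · simp [hj]
      · simp only [hj, if_false]
        exact cIdx_image S' j

/-- One block integral. -/
noncomputable def blockInt (f : Ωa → ℝ) (p : ℕ → V d) (m : ℕ) (S : Finset ℕ) (i : ℕ) : ℝ :=
  ∫ ω, (if i = 0 then f ω else 1) *
      ∏ j ∈ (Finset.range (m + 1)).filter (fun j => cIdx S j = i), σ (p j) ω ∂P

lemma nestFn_nil : nestFn P σ List.nil = fun _ => 0 := rfl

lemma nestFn_single (x : V d) : nestFn P σ (x :: List.nil) = fun ω => σ x ω := rfl

lemma nestFn_cons (x : V d) (l : List (V d)) (hl : l ≠ []) :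
    nestFn P σ (x :: l) =
      fun ω => σ x ω * (nestFn P σ l ω - ∫ ω', nestFn P σ l ω' ∂P) := by
  cases l with
  | nil => exact absurd rfl hl
  | cons y t => rfl

lemma nestFn_measurable (hσ : ∀ x, Measurable (σ x)) :
    ∀ l : List (V d), Measurable (nestFn P σ l)
  | [] => measurable_const
  | [x] => hσ x
  | x :: y :: l => by
      have h := nestFn_measurable hσ (y :: l)
      exact (hσ x).mul (h.sub measurable_const)

lemma nestFn_bound [IsProbabilityMeasure P] (hb : ∀ x, ∀ᵐ ω ∂P, |σ x ω| ≤ 1) :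
    ∀ l : List (V d), ∀ᵐ ω ∂P, |nestFn P σ l ω| ≤ 2 ^ l.length
  | [] => by
      filter_upwards with ω
      rw [nestFn_nil]
      norm_num

  | [x] => by
      filter_upwards [hb x] with ω h
      rw [nestFn_single]
      exact h.trans (by norm_num)
  | x :: y :: l => by
      have hN := nestFn_bound hb (y :: l)
      have hc : |∫ ω, nestFn P σ (y :: l) ω ∂P| ≤ 2 ^ (y :: l).length := by
        have h2 := norm_integral_le_of_norm_le_const (μ := P)
          (f := nestFn P σ (y :: l)) (C := 2 ^ (y :: l).length)
          (hN.mono fun ω h => by simpa [Real.norm_eq_abs] using h)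
        simpa [Real.norm_eq_abs, measure_univ] using h2
      filter_upwards [hb x, hN] with ω h1 h2
      rw [nestFn_cons P σ x (y :: l) (by simp)]
      have habs : |nestFn P σ (y :: l) ω - ∫ ω', nestFn P σ (y :: l) ω' ∂P| ≤
          2 ^ (y :: l).length + 2 ^ (y :: l).length := by
        have := norm_sub_le (nestFn P σ (y :: l) ω) (∫ ω', nestFn P σ (y :: l) ω' ∂P)
        simp only [Real.norm_eq_abs] at this
        exact this.trans (add_le_add h2 hc)
      calc |σ x ω * (nestFn P σ (y :: l) ω - ∫ ω', nestFn P σ (y :: l) ω' ∂P)|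
          = |σ x ω| * |nestFn P σ (y :: l) ω - ∫ ω', nestFn P σ (y :: l) ω' ∂P| :=
            abs_mul _ _
        _ ≤ 1 * (2 ^ (y :: l).length + 2 ^ (y :: l).length) :=
            mul_le_mul h1 habs (abs_nonneg _) zero_le_one
        _ = 2 ^ (x :: y :: l).length := by
            simp only [List.length_cons, one_mul]
            ring

lemma integrable_of_bound [IsProbabilityMeasure P] (f : Ωa → ℝ) (hf : Measurable f)
    (C : ℝ) (h : ∀ᵐ ω ∂P, |f ω| ≤ C) : Integrable f P :=
  (integrable_const C).mono' hf.aestronglyMeasurable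
    (by simpa [Real.norm_eq_abs] using h)

lemma image_succ_image_pred (u : Finset ℕ) : (u.image (· + 1)).image (· - 1) = u := by
  rw [Finset.image_image]
  have h : ((· - 1) ∘ (· + 1) : ℕ → ℕ) = id := funext fun x => by simp
  rw [h, Finset.image_id]

lemma powerset_image_succ (r : Finset ℕ) :
    (r.image (· + 1)).powerset = r.powerset.image (fun S => S.image (· + 1)) := by
  ext t
  simp only [Finset.mem_powerset, Finset.mem_image]
  constructor
  · intro ht
    refine ⟨t.image (· - 1), ?_, ?_⟩
    · intro a ha
      simp only [Finset.mem_image] at ha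
      obtain ⟨b, hb, rfl⟩ := ha
      have hb2 := ht hb
      simp only [Finset.mem_image] at hb2
      obtain ⟨c, hc, rfl⟩ := hb2
      simpa using hc
    · ext a
      simp only [Finset.mem_image]
      constructor
      · rintro ⟨b, ⟨c, hc, rfl⟩, rfl⟩
        have hc2 := ht hc
        simp only [Finset.mem_image] at hc2
        obtain ⟨e, _, rfl⟩ := hc2
        simpa using hc
      · intro ha
        have ha2 := ht ha
        simp only [Finset.mem_image] at ha2
        obtain ⟨e, he, rfl⟩ := ha2
        exact ⟨e, ⟨e + 1, ha, rfl⟩, by omega⟩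
  · rintro ⟨S, hS, rfl⟩
    exact Finset.image_subset_image hS

lemma sum_powerset_image_succ {M : Type*} [AddCommMonoid M] (r : Finset ℕ)
    (f : Finset ℕ → M) :
    ∑ t ∈ (r.image (· + 1)).powerset, f t = ∑ S ∈ r.powerset, f (S.image (· + 1)) := by
  rw [powerset_image_succ, Finset.sum_image]
  intro a _ b _ h
  have := congrArg (fun u => Finset.image (· - 1) u) h
  simpa only [image_succ_image_pred] using this


section Blocks
variable [IsProbabilityMeasure P]

lemma fiberA0 (m : ℕ) (S' : Finset ℕ) :
    (Finset.range (m + 2)).filter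
        (fun j => cIdx (insert 0 (S'.image (· + 1))) j = 0) = {0} := by
  ext k
  cases k with
  | zero => simp [cIdx_zero]
  | succ j =>
      simp only [Finset.mem_filter, Finset.mem_range, Finset.mem_singleton, cIdx_insert0]
      omega

lemma fiberA (m : ℕ) (S' : Finset ℕ) (i : ℕ) :
    (Finset.range (m + 2)).filter
        (fun j => cIdx (insert 0 (S'.image (· + 1))) j = i + 1) =
      ((Finset.range (m + 1)).filter (fun j => cIdx S' j = i)).image (· + 1) := by
  ext k
  cases k with
  | zero =>
      simp only [Finset.mem_filter, Finset.mem_range, cIdx_zero]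
      constructor
      · rintro ⟨-, h⟩; omega
      · intro h; exact absurd h (zero_not_mem_image_succ _)
  | succ j =>
      rw [mem_image_succ]
      simp only [Finset.mem_filter, Finset.mem_range, cIdx_insert0]
      omega

lemma fiberB0 (m : ℕ) (S' : Finset ℕ) :
    (Finset.range (m + 2)).filter (fun j => cIdx (S'.image (· + 1)) j = 0) =
      insert 0 (((Finset.range (m + 1)).filter (fun j => cIdx S' j = 0)).image (· + 1)) := by
  ext k
  cases k with
  | zero => simp [cIdx_zero]
  | succ j =>
      rw [Finset.mem_insert, mem_image_succ]
      simp only [Finset.mem_filter, Finset.mem_range, cIdx_image]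
      by_cases hz : cIdx S' j = 0
      · rw [if_pos hz]; omega
      · rw [if_neg hz]; omega

lemma fiberB1 (m : ℕ) (S' : Finset ℕ) :
    (Finset.range (m + 2)).filter (fun j => cIdx (S'.image (· + 1)) j = 1) = ∅ := by
  ext k
  cases k with
  | zero => simp [cIdx_zero]
  | succ j =>
      simp only [Finset.mem_filter, Finset.mem_range, cIdx_image]
      simp only [Finset.notMem_empty, iff_false, not_and]
      intro _
      split_ifs with h
      · exact not_false
      · omega

lemma fiberB2 (m : ℕ) (S' : Finset ℕ) (i : ℕ) :
    (Finset.range (m + 2)).filter (fun j => cIdx (S'.image (· + 1)) j = i + 2) =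
      ((Finset.range (m + 1)).filter (fun j => cIdx S' j = i + 1)).image (· + 1) := by
  ext k
  cases k with
  | zero =>
      simp only [Finset.mem_filter, Finset.mem_range, cIdx_zero]
      constructor
      · rintro ⟨-, h⟩; omega
      · intro h; exact absurd h (zero_not_mem_image_succ _)
  | succ j =>
      rw [mem_image_succ]
      simp only [Finset.mem_filter, Finset.mem_range, cIdx_image]
      by_cases hz : cIdx S' j = 0
      · rw [if_pos hz]; omega
      · rw [if_neg hz]; omega

lemma succ_injOn (t : Finset ℕ) : Set.InjOn (· + 1) t := fun a _ b _ h => by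
  have h' : a + 1 = b + 1 := h
  omega

lemma blockA0 (f : Ωa → ℝ) (p : ℕ → V d) (m : ℕ) (S' : Finset ℕ) :
    blockInt P σ f p (m + 1) (insert 0 (S'.image (· + 1))) 0 = ∫ ω, f ω * σ (p 0) ω ∂P := by
  rw [blockInt]
  have h : m + 1 + 1 = m + 2 := rfl
  rw [h, fiberA0]
  simp

lemma blockA1 (f : Ωa → ℝ) (p : ℕ → V d) (m : ℕ) (S' : Finset ℕ) (i : ℕ) :
    blockInt P σ f p (m + 1) (insert 0 (S'.image (· + 1))) (i + 1) =
      blockInt P σ (fun _ => 1) (fun j => p (j + 1)) m S' i := by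
  rw [blockInt, blockInt]
  have h : m + 1 + 1 = m + 2 := rfl
  rw [h, fiberA]
  apply integral_congr_ae
  filter_upwards with ω
  rw [Finset.prod_image (succ_injOn _)]
  simp

lemma blockB0 (f : Ωa → ℝ) (p : ℕ → V d) (m : ℕ) (S' : Finset ℕ) :
    blockInt P σ f p (m + 1) (S'.image (· + 1)) 0 =
      blockInt P σ (fun ω => f ω * σ (p 0) ω) (fun j => p (j + 1)) m S' 0 := by
  rw [blockInt, blockInt]
  have h : m + 1 + 1 = m + 2 := rfl
  rw [h, fiberB0]
  apply integral_congr_ae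
  filter_upwards with ω
  rw [Finset.prod_insert (zero_not_mem_image_succ _), Finset.prod_image (succ_injOn _)]
  simp [mul_assoc]

lemma blockB1 (f : Ωa → ℝ) (p : ℕ → V d) (m : ℕ) (S' : Finset ℕ) :
    blockInt P σ f p (m + 1) (S'.image (· + 1)) 1 = 1 := by
  rw [blockInt]
  have h : m + 1 + 1 = m + 2 := rfl
  rw [h, fiberB1]
  simp

lemma blockB2 (f : Ωa → ℝ) (p : ℕ → V d) (m : ℕ) (S' : Finset ℕ) (i : ℕ) :
    blockInt P σ f p (m + 1) (S'.image (· + 1)) (i + 2) =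
      blockInt P σ (fun ω => f ω * σ (p 0) ω) (fun j => p (j + 1)) m S' (i + 1) := by
  rw [blockInt, blockInt]
  have h : m + 1 + 1 = m + 2 := rfl
  rw [h, fiberB2]
  apply integral_congr_ae
  filter_upwards with ω
  rw [Finset.prod_image (succ_injOn _)]
  simp

lemma gen (hσ : ∀ x, Measurable (σ x)) (hb : ∀ x, ∀ᵐ ω ∂P, |σ x ω| ≤ 1) (m : ℕ) :
    ∀ (p : ℕ → V d) (f : Ωa → ℝ), Measurable f → (∀ᵐ ω ∂P, |f ω| ≤ 1) →
      ∫ ω, f ω * nestFn P σ ((List.range (m + 1)).map p) ω ∂P =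
        ∑ S ∈ (Finset.range m).powerset,
          (-1 : ℝ) ^ S.card * ∏ i ∈ Finset.range (m + 1), blockInt P σ f p m S i := by
  induction m with
  | zero =>
      intro p f hf hfb
      have h1 : (List.range 1).map p = p 0 :: List.nil := by
        simp [List.range_succ]
      rw [h1, nestFn_single]
      simp only [Finset.range_zero, Finset.powerset_empty, Finset.sum_singleton,
        Finset.card_empty, pow_zero, one_mul, zero_add, Finset.range_one,
        Finset.prod_singleton, blockInt]
      rw [Finset.filter_singleton]
      simp [cIdx_zero]
  | succ m IH =>
      intro p f hf hfb
      have hT : (List.range (m + 1 + 1)).map p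
          = p 0 :: (List.range (m + 1)).map (fun j => p (j + 1)) := by
        rw [List.range_succ_eq_map]
        simp [List.map_map, Function.comp]
      have hTne : ((List.range (m + 1)).map (fun j => p (j + 1))) ≠ List.nil := by simp
      set q : ℕ → V d := fun j => p (j + 1) with hq
      set N : Ωa → ℝ := nestFn P σ ((List.range (m + 1)).map q) with hN
      have hNmeas : Measurable N := nestFn_measurable P σ hσ _
      have hNbdd : ∀ᵐ ω ∂P, |N ω| ≤ 2 ^ (m + 1) := by
        have h := nestFn_bound P σ hb ((List.range (m + 1)).map q)
        simpa using h
      have hf0 : Measurable (fun ω => f ω * σ (p 0) ω) := hf.mul (hσ _)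
      have hf0b : ∀ᵐ ω ∂P, |f ω * σ (p 0) ω| ≤ 1 := by
        filter_upwards [hfb, hb (p 0)] with ω h1 h2
        calc |f ω * σ (p 0) ω| = |f ω| * |σ (p 0) ω| := abs_mul _ _
          _ ≤ 1 * 1 := mul_le_mul h1 h2 (abs_nonneg _) zero_le_one
          _ = 1 := one_mul 1
      have hsplit : ∫ ω, f ω * nestFn P σ ((List.range (m + 1 + 1)).map p) ω ∂P
          = (∫ ω, (f ω * σ (p 0) ω) * N ω ∂P)
            - (∫ ω, f ω * σ (p 0) ω ∂P) * ∫ ω, N ω ∂P := by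
        rw [hT]
        simp only [nestFn_cons P σ _ _ hTne, ← hq, ← hN]
        have hi1 : Integrable (fun ω => (f ω * σ (p 0) ω) * N ω) P := by
          apply integrable_of_bound P _ (hf0.mul hNmeas) (2 ^ (m + 1))
          filter_upwards [hf0b, hNbdd] with ω h1 h2
          calc |(f ω * σ (p 0) ω) * N ω| = |f ω * σ (p 0) ω| * |N ω| := abs_mul _ _
            _ ≤ 1 * 2 ^ (m + 1) := mul_le_mul h1 h2 (abs_nonneg _) zero_le_one
            _ = 2 ^ (m + 1) := one_mul _
        have hi2 : Integrable (fun ω => (f ω * σ (p 0) ω) * (∫ ω', N ω' ∂P)) P :=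
          (integrable_of_bound P _ hf0 1 hf0b).mul_const _
        calc ∫ ω, f ω * (σ (p 0) ω * (N ω - ∫ ω', N ω' ∂P)) ∂P
            = ∫ ω, ((f ω * σ (p 0) ω) * N ω - (f ω * σ (p 0) ω) * (∫ ω', N ω' ∂P)) ∂P := by
              apply integral_congr_ae
              filter_upwards with ω
              ring
          _ = (∫ ω, (f ω * σ (p 0) ω) * N ω ∂P)
              - ∫ ω, (f ω * σ (p 0) ω) * (∫ ω', N ω' ∂P) ∂P := integral_sub hi1 hi2
          _ = _ := by rw [integral_mul_const]
      have hIH1 := IH q (fun ω => f ω * σ (p 0) ω) hf0 hf0b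
      have hIH2 := IH q (fun _ => (1 : ℝ)) measurable_const
        (by filter_upwards with ω; norm_num)
      have hNint : ∫ ω, N ω ∂P = ∑ S ∈ (Finset.range m).powerset,
          (-1 : ℝ) ^ S.card * ∏ i ∈ Finset.range (m + 1), blockInt P σ (fun _ => 1) q m S i := by
        rw [← hIH2]
        apply integral_congr_ae
        filter_upwards with ω
        rw [one_mul]
      rw [hsplit, hIH1, hNint]
      have hrange : Finset.range (m + 1) = insert 0 ((Finset.range m).image (· + 1)) := by
        ext k
        simp only [Finset.mem_range, Finset.mem_insert, Finset.mem_image]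
        constructor
        · intro hk
          rcases Nat.eq_zero_or_pos k with rfl | hpos
          · exact Or.inl rfl
          · exact Or.inr ⟨k - 1, by omega, by omega⟩
        · rintro (rfl | ⟨a, ha, rfl⟩) <;> omega
      conv_rhs => rw [hrange, Finset.sum_powerset_insert (zero_not_mem_image_succ _),
        sum_powerset_image_succ, sum_powerset_image_succ]
      rw [Finset.mul_sum, ← Finset.sum_sub_distrib, ← Finset.sum_add_distrib]
      apply Finset.sum_congr rfl
      intro S' _
      have hcard1 : (S'.image (· + 1)).card = S'.card :=
        Finset.card_image_of_injective _ (fun a b h => by omega)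
      have hcard2 : (insert 0 (S'.image (· + 1))).card = S'.card + 1 := by
        rw [Finset.card_insert_of_notMem (zero_not_mem_image_succ S'), hcard1]
      have hprodB : ∏ i ∈ Finset.range (m + 1 + 1), blockInt P σ f p (m + 1) (S'.image (· + 1)) i
          = ∏ i ∈ Finset.range (m + 1), blockInt P σ (fun ω => f ω * σ (p 0) ω) q m S' i := by
        rw [Finset.prod_range_succ' _ (m + 1), Finset.prod_range_succ' _ m]
        rw [blockB0, blockB1]
        rw [Finset.prod_congr rfl (fun i _ => blockB2 P σ f p m S' i)]
        rw [mul_one, ← Finset.prod_range_succ' _ m]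
      have hprodA : ∏ i ∈ Finset.range (m + 1 + 1),
            blockInt P σ f p (m + 1) (insert 0 (S'.image (· + 1))) i
          = (∏ i ∈ Finset.range (m + 1), blockInt P σ (fun _ => 1) q m S' i)
              * ∫ ω, f ω * σ (p 0) ω ∂P := by
        rw [Finset.prod_range_succ' _ (m + 1), blockA0]
        rw [Finset.prod_congr rfl (fun i _ => blockA1 P σ f p m S' i)]
      rw [hprodA, hprodB, hcard1, hcard2]
      ring

end Blocks


section PiInt
variable [IsProbabilityMeasure P]

lemma integrable_of_bound' {α : Type*} [MeasurableSpace α] (μ : Measure α)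
    [IsProbabilityMeasure μ] (f : α → ℝ) (hf : Measurable f)
    (C : ℝ) (h : ∀ᵐ ω ∂μ, |f ω| ≤ C) : Integrable f μ :=
  (integrable_const C).mono' hf.aestronglyMeasurable
    (by simpa [Real.norm_eq_abs] using h)

lemma integral_pi_prod (m : ℕ) (h : Fin m → Ωa → ℝ) :
    ∫ ω', ∏ i, h i (ω' i) ∂(Measure.pi fun _ : Fin m => P) = ∏ i, ∫ ω, h i ω ∂P := by
  letI : MeasureSpace Ωa := ⟨P⟩
  haveI : SigmaFinite (volume : Measure Ωa) := (inferInstance : SigmaFinite P)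
  exact MeasureTheory.integral_fintype_prod_eq_prod h

lemma blockInt_prod (p : ℕ → V d) (m : ℕ) (S : Finset ℕ) :
    ∏ i ∈ Finset.range (m + 1), blockInt P σ (fun _ => 1) p m S i =
      ∫ ω', ∏ j : Fin (m + 1),
          σ (p (j : ℕ)) (ω' ⟨cIdx S (j : ℕ), lt_of_le_of_lt (cIdx_le S (j : ℕ)) j.isLt⟩)
        ∂(Measure.pi fun _ : Fin (m + 1) => P) := by
  set cF : Fin (m + 1) → Fin (m + 1) :=
    fun j => ⟨cIdx S (j : ℕ), lt_of_le_of_lt (cIdx_le S (j : ℕ)) j.isLt⟩ with hcF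
  have hbi : ∀ i : Fin (m + 1), blockInt P σ (fun _ => 1) p m S (i : ℕ)
      = ∫ ω, ∏ j ∈ Finset.univ.filter (fun j => cF j = i), σ (p (j : ℕ)) ω ∂P := by
    intro i
    rw [blockInt]
    apply integral_congr_ae
    filter_upwards with ω
    have h1 : (if (i : ℕ) = 0 then (fun _ : Ωa => (1 : ℝ)) ω else 1) = 1 := by
      split <;> rfl
    rw [h1, one_mul]
    rw [Finset.prod_filter, Finset.prod_filter]
    rw [← Fin.prod_univ_eq_prod_range
      (fun j => if cIdx S j = (i : ℕ) then σ (p j) ω else 1) (m + 1)]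
    apply Finset.prod_congr rfl
    intro j _
    have hiff : (cIdx S (j : ℕ) = (i : ℕ)) ↔ cF j = i := by
      constructor
      · intro h; exact Fin.ext (by simpa [hcF] using h)
      · intro h
        have h2 := congrArg Fin.val h
        simpa [hcF] using h2
    simp only [hiff]
  have step1 : ∀ ω' : Fin (m + 1) → Ωa,
      (∏ i : Fin (m + 1), ∏ j ∈ Finset.univ.filter (fun j => cF j = i),
          σ (p (j : ℕ)) (ω' i))
        = ∏ j : Fin (m + 1), σ (p (j : ℕ)) (ω' (cF j)) := by
    intro ω'
    rw [← Finset.prod_fiberwise_of_maps_to (fun j _ => Finset.mem_univ (cF j))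
      (fun j => σ (p (j : ℕ)) (ω' (cF j)))]
    apply Finset.prod_congr rfl
    intro i _
    apply Finset.prod_congr rfl
    intro j hj
    rw [(Finset.mem_filter.mp hj).2]
  calc ∏ i ∈ Finset.range (m + 1), blockInt P σ (fun _ => 1) p m S i
      = ∏ i : Fin (m + 1), blockInt P σ (fun _ => 1) p m S (i : ℕ) :=
        (Fin.prod_univ_eq_prod_range _ _).symm
    _ = ∏ i : Fin (m + 1), ∫ ω, ∏ j ∈ Finset.univ.filter (fun j => cF j = i),
          σ (p (j : ℕ)) ω ∂P := Finset.prod_congr rfl (fun i _ => hbi i)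
    _ = ∫ ω', ∏ i : Fin (m + 1), ∏ j ∈ Finset.univ.filter (fun j => cF j = i),
          σ (p (j : ℕ)) (ω' i) ∂(Measure.pi fun _ : Fin (m + 1) => P) :=
        (integral_pi_prod P (m + 1) _).symm
    _ = _ := by
        apply integral_congr_ae
        filter_upwards with ω'
        exact step1 ω'

lemma ae_good (m : ℕ) (hσ : ∀ x, Measurable (σ x))
    (hb : ∀ x, ∀ᵐ ω ∂P, |σ x ω| ≤ 1) :
    ∀ᵐ ω' ∂(Measure.pi fun _ : Fin m => P), ∀ (i : Fin m) (z : V d), |σ z (ω' i)| ≤ 1 := by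
  rw [MeasureTheory.ae_all_iff]
  intro i
  rw [MeasureTheory.ae_all_iff]
  intro z
  have h0 : P {ω | ¬ |σ z ω| ≤ 1} = 0 := by
    have h := hb z
    rwa [MeasureTheory.ae_iff] at h
  rw [MeasureTheory.ae_iff]
  exact MeasureTheory.Measure.pi_eval_preimage_null (fun _ => P) h0

end PiInt


section KeyLemma
variable [IsProbabilityMeasure P]

lemma key_bound {n : ℕ} (hn : 1 ≤ n)
    (hσ : ∀ x, Measurable (σ x)) (hb : ∀ x, ∀ᵐ ω ∂P, |σ x ω| ≤ 1)
    (idx : Fin n → Fin d × Fin d) (X : Set (Fin (n - 1) → V d))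
    (x0 xn : V d) (M0 : ℝ)
    (hM : ∀ b : Fin n → V d → ℂ, (∀ j x, ‖b j x‖ ≤ 1) →
      ‖Tn n (sioK n idx b) X x0 xn‖ ≤ M0)
    (G : Finset (V d)) (F : Finset ↥X)
    (hF : ∀ y : ↥X, y ∈ F ↔ ∀ k, (y : Fin (n - 1) → V d) k ∈ G) :
    ‖∑ y ∈ F, (∏ j : Fin n, sioKernel d (idx j).1 (idx j).2
          (fullPath n x0 xn (y : Fin (n - 1) → V d) (j : ℕ) -
            fullPath n x0 xn (y : Fin (n - 1) → V d) ((j : ℕ) + 1))) *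
        ((Wnest P σ ((List.range (n + 1)).map
            (fullPath n x0 xn (y : Fin (n - 1) → V d))) : ℝ) : ℂ)‖
      ≤ 2 ^ n * M0 := by
  classical
  have hM0 : 0 ≤ M0 := le_trans (norm_nonneg _) (hM (fun _ _ => 0) (by intro j z; simp))
  let p : ↥X → ℕ → V d := fun y => fullPath n x0 xn (y : Fin (n - 1) → V d)
  let Kp : ↥X → ℂ := fun y => ∏ j : Fin n, sioKernel d (idx j).1 (idx j).2
      (p y (j : ℕ) - p y ((j : ℕ) + 1))
  show ‖∑ y ∈ F, Kp y * ((Wnest P σ ((List.range (n + 1)).map (p y)) : ℝ) : ℂ)‖ ≤ 2 ^ n * M0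
  have hW : ∀ y : ↥X, Wnest P σ ((List.range (n + 1)).map (p y))
      = ∑ S ∈ (Finset.range n).powerset,
          (-1 : ℝ) ^ S.card * ∏ i ∈ Finset.range (n + 1),
            blockInt P σ (fun _ => 1) (p y) n S i := by
    intro y
    have hgen := gen P σ hσ hb n (p y) (fun _ => 1) measurable_const
      (by filter_upwards with ω; norm_num)
    rw [Wnest, ← hgen]
    apply integral_congr_ae
    filter_upwards with ω
    rw [one_mul]
  have hsum : ∑ y ∈ F, Kp y * ((Wnest P σ ((List.range (n + 1)).map (p y)) : ℝ) : ℂ)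
      = ∑ S ∈ (Finset.range n).powerset, ((-1 : ℂ) ^ S.card *
          ∑ y ∈ F, Kp y * ((∏ i ∈ Finset.range (n + 1),
            blockInt P σ (fun _ => 1) (p y) n S i : ℝ) : ℂ)) := by
    calc ∑ y ∈ F, Kp y * ((Wnest P σ ((List.range (n + 1)).map (p y)) : ℝ) : ℂ)
        = ∑ y ∈ F, ∑ S ∈ (Finset.range n).powerset,
            ((-1 : ℂ) ^ S.card * (Kp y * ((∏ i ∈ Finset.range (n + 1),
              blockInt P σ (fun _ => 1) (p y) n S i : ℝ) : ℂ))) := by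
          apply Finset.sum_congr rfl
          intro y _
          rw [hW y]
          push_cast
          rw [Finset.mul_sum]
          apply Finset.sum_congr rfl
          intro S _
          ring
      _ = ∑ S ∈ (Finset.range n).powerset, ∑ y ∈ F,
            ((-1 : ℂ) ^ S.card * (Kp y * ((∏ i ∈ Finset.range (n + 1),
              blockInt P σ (fun _ => 1) (p y) n S i : ℝ) : ℂ))) := Finset.sum_comm
      _ = _ := by
          apply Finset.sum_congr rfl
          intro S _
          rw [Finset.mul_sum]
  rw [hsum]
  refine (norm_sum_le _ _).trans ?_
  have hinner : ∀ S ∈ (Finset.range n).powerset,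
      ‖((-1 : ℂ) ^ S.card * ∑ y ∈ F, Kp y * ((∏ i ∈ Finset.range (n + 1),
          blockInt P σ (fun _ => 1) (p y) n S i : ℝ) : ℂ))‖ ≤ M0 := by
    intro S _
    rw [norm_mul, norm_pow, norm_neg, norm_one, one_pow, one_mul]
    -- convert inner sum to an integral over the product space
    set μpi : Measure (Fin (n + 1) → Ωa) := Measure.pi fun _ => P with hμpi
    have hpi : IsProbabilityMeasure μpi := by
      rw [hμpi]; infer_instance
    set cF : Fin (n + 1) → Fin (n + 1) :=
      fun j => ⟨cIdx S (j : ℕ), lt_of_le_of_lt (cIdx_le S (j : ℕ)) j.isLt⟩ with hcF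
    have hmeasy : ∀ y : ↥X, Measurable (fun ω' : Fin (n + 1) → Ωa =>
        (∏ j : Fin (n + 1), σ (p y (j : ℕ)) (ω' (cF j)) : ℝ)) := by
      intro y
      apply Finset.measurable_prod
      intro j _
      exact (hσ _).comp (measurable_pi_apply _)
    have hbndy : ∀ y : ↥X, ∀ᵐ ω' ∂μpi,
        |(∏ j : Fin (n + 1), σ (p y (j : ℕ)) (ω' (cF j)) : ℝ)| ≤ 1 := by
      intro y
      filter_upwards [ae_good P σ (n + 1) hσ hb] with ω' hg
      rw [Finset.abs_prod]
      apply Finset.prod_le_one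
      · intro j _; exact abs_nonneg _
      · intro j _; exact hg (cF j) _
    have hinty : ∀ y : ↥X, Integrable (fun ω' : Fin (n + 1) → Ωa =>
        Kp y * ((∏ j : Fin (n + 1), σ (p y (j : ℕ)) (ω' (cF j)) : ℝ) : ℂ)) μpi := by
      intro y
      exact ((integrable_of_bound' μpi _ (hmeasy y) 1 (hbndy y)).ofReal).const_mul _
    have heq : ∑ y ∈ F, Kp y * ((∏ i ∈ Finset.range (n + 1),
          blockInt P σ (fun _ => 1) (p y) n S i : ℝ) : ℂ)
        = ∫ ω', ∑ y ∈ F, Kp y * ((∏ j : Fin (n + 1),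
            σ (p y (j : ℕ)) (ω' (cF j)) : ℝ) : ℂ) ∂μpi := by
      rw [integral_finset_sum F (fun y _ => hinty y)]
      apply Finset.sum_congr rfl
      intro y _
      rw [blockInt_prod P σ (p y) n S]
      rw [MeasureTheory.integral_const_mul]
      congr 1
      exact (integral_ofReal (𝕜 := ℂ)).symm
    rw [heq]
    have hnorm : ∀ᵐ ω' ∂μpi, ‖∑ y ∈ F, Kp y * ((∏ j : Fin (n + 1),
        σ (p y (j : ℕ)) (ω' (cF j)) : ℝ) : ℂ)‖ ≤ M0 := by
      filter_upwards [ae_good P σ (n + 1) hσ hb] with ω' hg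
      -- build the multipliers b
      set b : Fin n → V d → ℂ := fun j z =>
        (if ((j : ℕ) + 1 < n ∧ z ∉ G) then (0 : ℂ) else 1) *
          ((max (-1) (min 1 (σ z (ω' (cF j.succ)))) : ℝ) : ℂ) with hbdef
      have hb1 : ∀ j z, ‖b j z‖ ≤ 1 := by
        intro j z
        rw [hbdef]
        simp only
        rw [norm_mul]
        have h1 : ‖(if ((j : ℕ) + 1 < n ∧ z ∉ G) then (0 : ℂ) else 1)‖ ≤ 1 := by
          split <;> simp
        have h2 : ‖((max (-1) (min 1 (σ z (ω' (cF j.succ)))) : ℝ) : ℂ)‖ ≤ 1 := by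
          rw [Complex.norm_real, Real.norm_eq_abs]
          rw [abs_le]
          constructor
          · exact le_max_left _ _
          · exact max_le (by norm_num) (min_le_left _ _)
        calc ‖(if ((j : ℕ) + 1 < n ∧ z ∉ G) then (0 : ℂ) else 1)‖ *
              ‖((max (-1) (min 1 (σ z (ω' (cF j.succ)))) : ℝ) : ℂ)‖
            ≤ 1 * 1 := mul_le_mul h1 h2 (norm_nonneg _) zero_le_one
          _ = 1 := one_mul 1
      have hclamp : ∀ z (i : Fin (n + 1)),
          max (-1 : ℝ) (min 1 (σ z (ω' i))) = σ z (ω' i) := by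
        intro z i
        have h := hg i z
        rw [abs_le] at h
        rw [min_eq_right h.2, max_eq_right h.1]
      -- evaluate b along paths in F
      have hbev : ∀ y : ↥X, y ∈ F → ∀ j : Fin n,
          b j (p y ((j : ℕ) + 1)) = ((σ (p y ((j : ℕ) + 1)) (ω' (cF j.succ)) : ℝ) : ℂ) := by
        intro y hy j
        rw [hbdef]
        simp only
        have hcond : ¬(((j : ℕ) + 1 < n) ∧ (p y ((j : ℕ) + 1) ∉ G)) := by
          rintro ⟨h1, h2⟩
          apply h2
          have hfp : p y ((j : ℕ) + 1) = (y : Fin (n - 1) → V d) ⟨(j : ℕ), by omega⟩ := by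
            show fullPath n x0 xn _ ((j : ℕ) + 1) = _
            rw [fullPath]
            rw [dif_neg (by omega), dif_pos (by omega)]
            exact congrArg _ (Fin.ext (by simp))
          rw [hfp]
          exact (hF y).1 hy _
        rw [if_neg hcond, one_mul, hclamp]
      -- identify the sum with Tn
      have hTn0 : Tn n (sioK n idx b) X x0 xn
          = ∑ y ∈ F, Kp y * ∏ j : Fin n, b j (p y ((j : ℕ) + 1)) := by
        rw [Tn]
        rw [tsum_eq_sum (s := F) ?_]
        · apply Finset.sum_congr rfl
          intro y _
          rw [← Finset.prod_mul_distrib]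
          apply Finset.prod_congr rfl
          intro j _
          rfl
        · intro y hy
          have hk : ∃ k : Fin (n - 1), (y : Fin (n - 1) → V d) k ∉ G := by
            by_contra hcon
            push_neg at hcon
            exact hy ((hF y).2 hcon)
          obtain ⟨k, hk⟩ := hk
          have hkn : (k : ℕ) < n - 1 := k.isLt
          apply Finset.prod_eq_zero (Finset.mem_univ (⟨(k : ℕ), by omega⟩ : Fin n))
          show sioKernel d _ _ _ * b _ (fullPath n x0 xn _ ((k : ℕ) + 1)) = 0
          have hfp : fullPath n x0 xn (y : Fin (n - 1) → V d) ((k : ℕ) + 1)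
              = (y : Fin (n - 1) → V d) k := by
            rw [fullPath]
            rw [dif_neg (by omega), dif_pos (by omega)]
            exact congrArg _ (Fin.ext (by simp))
          rw [hfp, hbdef]
          simp only
          rw [if_pos ⟨by omega, hk⟩, zero_mul, mul_zero]
      have hTneq : Tn n (sioK n idx b) X x0 xn
          = ∑ y ∈ F, Kp y * ((∏ j : Fin n,
              σ (p y ((j : ℕ) + 1)) (ω' (cF j.succ)) : ℝ) : ℂ) := by
        rw [hTn0]
        apply Finset.sum_congr rfl
        intro y hy
        congr 1
        rw [Finset.prod_congr rfl (fun j _ => hbev y hy j)]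
        push_cast
        rfl
      have hp0 : ∀ y : ↥X, p y 0 = x0 := by
        intro y
        show fullPath n x0 xn _ 0 = x0
        rw [fullPath]
        rw [dif_pos rfl]
      have hcF0 : cF 0 = 0 := by
        rw [hcF]
        exact Fin.ext (by simp [cIdx_zero])
      have hsplit2 : ∑ y ∈ F, Kp y * ((∏ j : Fin (n + 1),
          σ (p y (j : ℕ)) (ω' (cF j)) : ℝ) : ℂ)
          = ((σ x0 (ω' 0) : ℝ) : ℂ) * Tn n (sioK n idx b) X x0 xn := by
        rw [hTneq, Finset.mul_sum]
        apply Finset.sum_congr rfl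
        intro y hy
        rw [Fin.prod_univ_succ]
        simp only [Fin.val_zero, Fin.val_succ]
        rw [hp0 y, hcF0]
        push_cast
        ring
      rw [hsplit2, norm_mul]
      have hx0 : ‖((σ x0 (ω' 0) : ℝ) : ℂ)‖ ≤ 1 := by
        rw [Complex.norm_real, Real.norm_eq_abs]
        exact hg 0 x0
      calc ‖((σ x0 (ω' 0) : ℝ) : ℂ)‖ * ‖Tn n (sioK n idx b) X x0 xn‖
          ≤ 1 * M0 := mul_le_mul hx0 (hM b hb1) (norm_nonneg _) zero_le_one
        _ = M0 := one_mul M0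
    exact norm_integral_le_of_norm_le_const hnorm |>.trans (by simp)
  calc ∑ S ∈ (Finset.range n).powerset, ‖((-1 : ℂ) ^ S.card *
        ∑ y ∈ F, Kp y * ((∏ i ∈ Finset.range (n + 1),
          blockInt P σ (fun _ => 1) (p y) n S i : ℝ) : ℂ))‖
      ≤ ∑ S ∈ (Finset.range n).powerset, M0 := Finset.sum_le_sum hinner
    _ = 2 ^ n * M0 := by
        rw [Finset.sum_const, Finset.card_powerset, Finset.card_range, nsmul_eq_mul]
        push_cast
        ring

end KeyLemma

end TransferAux

end
/-- Lemma 3.1: transfer of deterministic bounds on `T^n_X` to the random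
quantity `f_X`, at the cost of a factor `2^n`. -/
theorem transfer_lemma (d n : ℕ) (hd : 3 ≤ d) (hn : 1 ≤ n)
    (Ω : Type*) [MeasurableSpace Ω] (P : MeasureTheory.Measure Ω)
    [MeasureTheory.IsProbabilityMeasure P]
    (σ : V d → Ω → ℝ) (hmeas : ∀ x, Measurable (σ x))
    (hindep : ProbabilityTheory.iIndepFun σ P)
    (hident : ∀ x y, ProbabilityTheory.IdentDistrib (σ x) (σ y) P P)
    (hbdd : ∀ x, ∀ᵐ ω ∂P, |σ x ω| ≤ 1)
    (idx : Fin n → Fin d × Fin d)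
    (X : Set (Fin (n - 1) → V d))
    (M : V d → V d → ℝ) (hMpos : ∀ x y, 0 ≤ M x y)
    (hM : ∀ b : Fin n → V d → ℂ, (∀ j x, ‖b j x‖ ≤ 1) →
      ∀ x0 xn : V d, ‖Tn n (sioK n idx b) X x0 xn‖ ≤ M x0 xn) :
    ∀ x0 xn : V d,
      ‖fX P σ n (fun j => sioKernel d (idx j).1 (idx j).2) X x0 xn‖ ≤
        2 ^ n * M x0 xn := by
  intro x0 xn
  classical
  set g : ↥X → ℂ := fun y =>
    (∏ j : Fin n, sioKernel d (idx j).1 (idx j).2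
        (fullPath n x0 xn (y : Fin (n - 1) → V d) (j : ℕ) -
          fullPath n x0 xn (y : Fin (n - 1) → V d) ((j : ℕ) + 1))) *
      ((Wnest P σ ((List.range (n + 1)).map
          (fullPath n x0 xn (y : Fin (n - 1) → V d))) : ℝ) : ℂ) with hg
  have hfX : fX P σ n (fun j => sioKernel d (idx j).1 (idx j).2) X x0 xn = ∑' y : ↥X, g y := rfl
  rw [hfX]
  by_cases hs : Summable g
  · -- limit of partial sums over growing boxes
    have hfin : ∀ G : Finset (V d),
        {y : ↥X | ∀ k, (y : Fin (n - 1) → V d) k ∈ G}.Finite := by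
      intro G
      have hpi : ((Set.univ : Set (Fin (n - 1))).pi fun _ => (↑G : Set (V d))).Finite :=
        Set.Finite.pi fun _ => G.finite_toSet
      have hpre : ((fun y : ↥X => (y : Fin (n - 1) → V d)) ⁻¹'
          ((Set.univ : Set (Fin (n - 1))).pi fun _ => (↑G : Set (V d)))).Finite :=
        Set.Finite.preimage (Subtype.val_injective.injOn) hpi
      apply hpre.subset
      intro y hy
      simp only [Set.mem_preimage, Set.mem_pi, Set.mem_univ, forall_true_left]
      intro k
      exact hy k
    set Fn : Finset (V d) → Finset ↥X := fun G => (hfin G).toFinset with hFn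
    have hmono : Monotone Fn := by
      intro G G' hGG'
      intro y hy
      rw [hFn, Set.Finite.mem_toFinset] at hy ⊢
      intro k
      exact hGG' (hy k)
    have hcof : ∀ s : Finset ↥X, ∃ G : Finset (V d), s ⊆ Fn G := by
      intro s
      refine ⟨s.biUnion fun y => Finset.image
        (fun k => (y : Fin (n - 1) → V d) k) Finset.univ, ?_⟩
      intro y hy
      rw [hFn, Set.Finite.mem_toFinset]
      intro k
      exact Finset.mem_biUnion.2 ⟨y, hy,
        Finset.mem_image.2 ⟨k, Finset.mem_univ k, rfl⟩⟩
    have htend : Filter.Tendsto Fn Filter.atTop Filter.atTop := by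
      rw [Filter.tendsto_atTop_atTop]
      intro s
      obtain ⟨G, hG⟩ := hcof s
      exact ⟨G, fun G' hG' => hG.trans (hmono hG')⟩
    have hHas := hs.hasSum
    have hcomp : Filter.Tendsto (fun G : Finset (V d) => ‖∑ y ∈ Fn G, g y‖)
        Filter.atTop (nhds ‖∑' y : ↥X, g y‖) := (hHas.comp htend).norm
    refine le_of_tendsto hcomp (Filter.Eventually.of_forall fun G => ?_)
    exact key_bound P σ hn hmeas hbdd idx X x0 xn (M x0 xn)
      (fun b hb1 => hM b hb1 x0 xn) G (Fn G)
      (fun y => by rw [hFn, Set.Finite.mem_toFinset]; exact Iff.rfl)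
  · rw [tsum_eq_zero_of_not_summable hs, norm_zero]
    exact mul_nonneg (by positivity) (hMpos x0 xn)
end

section
/- Let n ≥ 1 and x_0, x_1, …, x_n ∈ ℤ^d. If there exists 0 ≤ j < n with {x_0,…,x_j} ∩ {x_{j+1},…,x_n} = ∅, then W(x_0,x_1,…,x_n) = 0. Consequently, for every n ≥ 3, distinct x_0, x_n ∈ ℤ^d, every m ≥ 0 and 0 ≤ j_0 < n, and every choice of K_1,…,K_n of the form ∇_i(−Δ)^{−1}∇_{i'}^*, one has f_{S̃^m_{j_0}}(x_0,x_n) = f_{S^m_{j_0}}(x_0,x_n). -/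
open MeasureTheory ProbabilityTheory
open scoped ENNReal NNReal BigOperators

/-! ### Auxiliary lemmas for Statement 14 -/

section Statement14Aux

open MeasureTheory ProbabilityTheory

variable {Ω : Type*} [MeasurableSpace Ω] {d : ℕ} (P : MeasureTheory.Measure Ω) (σ : V d → Ω → ℝ)

lemma measurable_nestFn (hmeas : ∀ x, Measurable (σ x)) :
    ∀ l : List (V d), Measurable (nestFn P σ l)
  | [] => by simpa [nestFn] using measurable_const
  | [x] => by simpa [nestFn] using hmeas x
  | x :: y :: l => by
    have ih := measurable_nestFn hmeas (y :: l)
    simp only [nestFn]; exact (hmeas x).mul (ih.sub measurable_const)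

lemma intG_zero [MeasureTheory.IsProbabilityMeasure P] (l : List (V d)) :
    ∫ ω, (nestFn P σ l ω - ∫ ω', nestFn P σ l ω' ∂P) ∂P = 0 := by
  by_cases h : MeasureTheory.Integrable (nestFn P σ l) P
  · rw [MeasureTheory.integral_sub h (MeasureTheory.integrable_const _),
      MeasureTheory.integral_const]
    simp
  · have hc : ∫ ω', nestFn P σ l ω' ∂P = 0 := MeasureTheory.integral_undef h
    simp only [hc, sub_zero]

lemma listProd_factor (A : Finset (V d)) :
    ∀ l : List (V d), (∀ v ∈ l, v ∈ A) →
      ∃ Φ : (A → ℝ) → ℝ, Measurable Φ ∧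
        ∀ ω, (l.map fun v => σ v ω).prod = Φ fun i : A => σ i ω
  | [], _ => ⟨fun _ => 1, measurable_const, by simp⟩
  | v :: l, h => by
    obtain ⟨Φ, hΦ, hΦeq⟩ :=
      listProd_factor A l (fun w hw => h w (List.mem_cons_of_mem _ hw))
    exact ⟨fun t => t ⟨v, h v List.mem_cons_self⟩ * Φ t,
      (measurable_pi_apply _).mul hΦ, fun ω => by simp [hΦeq ω]⟩

lemma nestFn_factor (A : Finset (V d)) :
    ∀ l : List (V d), (∀ v ∈ l, v ∈ A) →
      ∃ Φ : (A → ℝ) → ℝ, Measurable Φ ∧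
        ∀ ω, nestFn P σ l ω = Φ fun i : A => σ i ω
  | [], _ => ⟨fun _ => 0, measurable_const, by simp [nestFn]⟩
  | [x], h => ⟨fun t => t ⟨x, h x (by simp)⟩, measurable_pi_apply _, by simp [nestFn]⟩
  | x :: y :: l, h => by
    obtain ⟨Φ, hΦ, hΦeq⟩ :=
      nestFn_factor A (y :: l) (fun w hw => h w (List.mem_cons_of_mem _ hw))
    refine ⟨fun t => t ⟨x, h x (by simp)⟩ * (Φ t - ∫ ω', nestFn P σ (y :: l) ω' ∂P),
      (measurable_pi_apply _).mul (hΦ.sub measurable_const), fun ω => ?_⟩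
    simp [nestFn, hΦeq ω]

lemma int_prod_G_zero [MeasureTheory.IsProbabilityMeasure P]
    (hmeas : ∀ x, Measurable (σ x))
    (hindep : ProbabilityTheory.iIndepFun σ P)
    (l₁ l₂ : List (V d)) (hdisj : ∀ a ∈ l₁, ∀ b ∈ l₂, a ≠ b) :
    ∫ ω, (l₁.map fun v => σ v ω).prod *
        (nestFn P σ l₂ ω - ∫ ω', nestFn P σ l₂ ω' ∂P) ∂P = 0 := by
  classical
  obtain ⟨Φ₁, hΦ₁, hΦ₁eq⟩ :=
    listProd_factor σ l₁.toFinset l₁ (fun v hv => List.mem_toFinset.2 hv)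
  obtain ⟨Φ₂, hΦ₂, hΦ₂eq⟩ :=
    nestFn_factor P σ l₂.toFinset l₂ (fun v hv => List.mem_toFinset.2 hv)
  set c := ∫ ω', nestFn P σ l₂ ω' ∂P with hc
  have hdis : Disjoint l₁.toFinset l₂.toFinset := by
    rw [Finset.disjoint_left]
    intro a ha hb
    exact hdisj a (List.mem_toFinset.1 ha) a (List.mem_toFinset.1 hb) rfl
  have hbase := hindep.indepFun_finset l₁.toFinset l₂.toFinset hdis hmeas
  have hcomp := hbase.comp hΦ₁ (show Measurable fun t => Φ₂ t - c from hΦ₂.sub measurable_const)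
  have h1 : (fun ω => (l₁.map fun v => σ v ω).prod)
      = Φ₁ ∘ (fun ω (i : l₁.toFinset) => σ i ω) := funext fun ω => hΦ₁eq ω
  have h2 : (fun ω => nestFn P σ l₂ ω - c)
      = (fun t => Φ₂ t - c) ∘ (fun ω (i : l₂.toFinset) => σ i ω) :=
    funext fun ω => by simp [hΦ₂eq ω]
  have hIF : ProbabilityTheory.IndepFun (fun ω => (l₁.map fun v => σ v ω).prod)
      (fun ω => nestFn P σ l₂ ω - c) P := by
    rw [h1, h2]; exact hcomp
  have hXm : Measurable fun ω => (l₁.map fun v => σ v ω).prod := by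
    rw [h1]
    exact hΦ₁.comp (measurable_pi_lambda _ fun i => hmeas i)
  have hYm : Measurable fun ω => nestFn P σ l₂ ω - c :=
    (measurable_nestFn P σ hmeas l₂).sub measurable_const
  have := hIF.integral_mul_eq_mul_integral hXm.aestronglyMeasurable hYm.aestronglyMeasurable
  simp only [Pi.mul_apply] at this
  rw [this, intG_zero P σ l₂, mul_zero]

lemma nestFn_append [MeasureTheory.IsProbabilityMeasure P]
    (hmeas : ∀ x, Measurable (σ x))
    (hindep : ProbabilityTheory.iIndepFun σ P)
    (l₂ : List (V d)) (h2 : l₂ ≠ []) :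
    ∀ l₁ : List (V d), l₁ ≠ [] → (∀ a ∈ l₁, ∀ b ∈ l₂, a ≠ b) →
      ∀ ω, nestFn P σ (l₁ ++ l₂) ω =
        (l₁.map fun v => σ v ω).prod *
          (nestFn P σ l₂ ω - ∫ ω', nestFn P σ l₂ ω' ∂P) := by
  intro l₁
  induction l₁ with
  | nil => intro h; exact absurd rfl h
  | cons v rest ih =>
    intro _ hdisj ω
    cases rest with
    | nil =>
      obtain ⟨w, t, rfl⟩ := List.exists_cons_of_ne_nil h2
      simp [nestFn]
    | cons w rest' =>
      have hdisj' : ∀ a ∈ w :: rest', ∀ b ∈ l₂, a ≠ b := fun a ha b hb =>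
        hdisj a (List.mem_cons_of_mem _ ha) b hb
      have hIH := ih (List.cons_ne_nil _ _) hdisj'
      have hint : ∫ ω', nestFn P σ ((w :: rest') ++ l₂) ω' ∂P = 0 := by
        rw [MeasureTheory.integral_congr_ae (Filter.Eventually.of_forall hIH)]
        exact int_prod_G_zero P σ hmeas hindep (w :: rest') l₂ hdisj'
      obtain ⟨u, s, hus⟩ := List.exists_cons_of_ne_nil
        (show (w :: rest') ++ l₂ ≠ [] from by simp)
      have hstep : nestFn P σ ((v :: w :: rest') ++ l₂) ω =
          σ v ω * (nestFn P σ ((w :: rest') ++ l₂) ω -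
            ∫ ω', nestFn P σ ((w :: rest') ++ l₂) ω' ∂P) := by
        rw [show (v :: w :: rest') ++ l₂ = v :: u :: s from by simp [hus], hus]
        simp [nestFn]
      rw [hstep, hint, sub_zero, hIH ω]
      simp [mul_assoc]

lemma Wnest_vanish [MeasureTheory.IsProbabilityMeasure P]
    (hmeas : ∀ x, Measurable (σ x))
    (hindep : ProbabilityTheory.iIndepFun σ P)
    (n : ℕ) (x : ℕ → V d)
    (h : ∃ j, j < n ∧ ∀ a, a ≤ j → ∀ b, j < b → b ≤ n → x a ≠ x b) :
    Wnest P σ ((List.range (n + 1)).map x) = 0 := by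
  obtain ⟨j, hj, hdisj⟩ := h
  set l₁ : List (V d) := (List.range (j + 1)).map x with hl₁
  set l₂ : List (V d) := (List.range (n - j)).map fun k => x (j + 1 + k) with hl₂
  have hsplit : (List.range (n + 1)).map x = l₁ ++ l₂ := by
    have hn1 : n + 1 = (j + 1) + (n - j) := by omega
    rw [hn1, List.range_add, List.map_append, List.map_map]
    rfl
  have h1ne : l₁ ≠ [] := by simp [hl₁]
  have h2ne : l₂ ≠ [] := by
    simp only [hl₂, ne_eq, List.map_eq_nil_iff, List.range_eq_nil]
    omega
  have hd' : ∀ a ∈ l₁, ∀ b ∈ l₂, a ≠ b := by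
    intro a ha b hb
    simp only [hl₁, List.mem_map, List.mem_range] at ha
    simp only [hl₂, List.mem_map, List.mem_range] at hb
    obtain ⟨a', ha', rfl⟩ := ha
    obtain ⟨k, hk, rfl⟩ := hb
    exact hdisj a' (by omega) (j + 1 + k) (by omega) (by omega)
  have hptw := nestFn_append P σ hmeas hindep l₂ h2ne l₁ h1ne hd'
  rw [Wnest, hsplit, MeasureTheory.integral_congr_ae (Filter.Eventually.of_forall hptw)]
  exact int_prod_G_zero P σ hmeas hindep l₁ l₂ hd'

end Statement14Aux

/-- vanishing on reducible paths, and Lemma 3.3: `W(x_0,…,x_n) = 0` for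
reducible paths, hence `f_{S̃^m_{j_0}} = f_{S^m_{j_0}}`. -/
theorem vanishing_on_reducible_paths (d : ℕ) (hd : 1 ≤ d)
    (Ω : Type*) [MeasurableSpace Ω] (P : MeasureTheory.Measure Ω)
    [MeasureTheory.IsProbabilityMeasure P]
    (σ : V d → Ω → ℝ) (hmeas : ∀ x, Measurable (σ x))
    (hindep : ProbabilityTheory.iIndepFun σ P)
    (hident : ∀ x y, ProbabilityTheory.IdentDistrib (σ x) (σ y) P P)
    (hbdd : ∀ x, ∀ᵐ ω ∂P, |σ x ω| ≤ 1) :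
    -- the vanishing property for reducible paths
    (∀ n : ℕ, 1 ≤ n → ∀ x : ℕ → V d,
      (∃ j, j < n ∧ ∀ a, a ≤ j → ∀ b, j < b → b ≤ n → x a ≠ x b) →
      Wnest P σ ((List.range (n + 1)).map x) = 0) ∧
    -- consequently `f_{S̃^m_{j_0}} = f_{S^m_{j_0}}`
    (∀ n : ℕ, 3 ≤ n → ∀ x0 xn : V d, x0 ≠ xn → ∀ m j0 : ℕ, j0 < n →
      ∀ idx : Fin n → Fin d × Fin d,
        fX P σ n (fun j => sioKernel d (idx j).1 (idx j).2)
            (StildeSet n x0 xn m j0) x0 xn =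
          fX P σ n (fun j => sioKernel d (idx j).1 (idx j).2)
            (Sset n x0 xn m j0) x0 xn) := by

  have W1 : ∀ n : ℕ, 1 ≤ n → ∀ x : ℕ → V d,
      (∃ j, j < n ∧ ∀ a, a ≤ j → ∀ b, j < b → b ≤ n → x a ≠ x b) →
      Wnest P σ ((List.range (n + 1)).map x) = 0 := fun n _ x h =>
    Wnest_vanish P σ hmeas hindep n x h
  refine ⟨W1, ?_⟩
  intro n hn x0 xn _ m j0 hj0 idx
  classical
  set Kc : Fin n → V d → ℂ := fun j => sioKernel d (idx j).1 (idx j).2 with hKc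
  set F : (Fin (n - 1) → V d) → ℂ := fun y =>
    (∏ j : Fin n, Kc j (fullPath n x0 xn y (j : ℕ) -
        fullPath n x0 xn y ((j : ℕ) + 1))) *
      ((Wnest P σ ((List.range (n + 1)).map (fullPath n x0 xn y)) : ℝ) : ℂ) with hF
  have hsub : StildeSet n x0 xn m j0 ⊆ Sset n x0 xn m j0 := fun y hy => hy.1
  have lhs : fX P σ n Kc (StildeSet n x0 xn m j0) x0 xn =
      ∑' y, (StildeSet n x0 xn m j0).indicator F y := tsum_subtype _ F
  have rhs : fX P σ n Kc (Sset n x0 xn m j0) x0 xn =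
      ∑' y, (Sset n x0 xn m j0).indicator F y := tsum_subtype _ F
  rw [lhs, rhs]
  congr 1
  funext y
  by_cases hy : y ∈ StildeSet n x0 xn m j0
  · rw [Set.indicator_of_mem hy, Set.indicator_of_mem (hsub hy)]
  · rw [Set.indicator_of_notMem hy]
    by_cases hy2 : y ∈ Sset n x0 xn m j0
    · rw [Set.indicator_of_mem hy2]
      have hno : ∀ a, a ≤ j0 → ∀ b, j0 < b → b ≤ n →
          fullPath n x0 xn y a ≠ fullPath n x0 xn y b := by
        intro a ha b hb1 hb2 heq
        exact hy ⟨hy2, a, ha, b, hb1, hb2, heq⟩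
      have hW : Wnest P σ ((List.range (n + 1)).map (fullPath n x0 xn y)) = 0 :=
        W1 n (by omega) (fullPath n x0 xn y) ⟨j0, hj0, hno⟩
      simp [hF, hW]
    · rw [Set.indicator_of_notMem hy2]
end

section
/- Let d ≥ 1 and ε > 0, and let α, β be real numbers with 3d/4 ≤ α ≤ d − ε and 3d/4 ≤ β ≤ d − ε. Then there exists a constant C, depending only on d, such that for all a, b ∈ ℤ^d: Σ_{x∈ℤ^d} ⟨a−x⟩^{−α} ⟨x−b⟩^{−β} ≤ C ε^{−1} ⟨a−b⟩^{−(α+β−d)}. -/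
open MeasureTheory ProbabilityTheory
open scoped ENNReal NNReal BigOperators

section CPBhelpers
variable {d : ℕ}

set_option maxHeartbeats 1000000

private lemma znorm_nonneg' (x : V d) : 0 ≤ znorm x := Real.sqrt_nonneg _

private lemma jap_one_le' (x : V d) : 1 ≤ jap x := by
  have := znorm_nonneg' x; unfold jap; linarith

private lemma jap_pos' (x : V d) : 0 < jap x := lt_of_lt_of_le one_pos (jap_one_le' x)

private def ce (x : V d) : EuclideanSpace ℝ (Fin d) := WithLp.toLp 2 (fun i => (x i : ℝ))

private lemma znorm_eq_norm (x : V d) : znorm x = ‖ce x‖ := by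
  rw [EuclideanSpace.norm_eq]
  unfold znorm ce
  congr 1
  refine Finset.sum_congr rfl fun i _ => ?_
  rw [Real.norm_eq_abs, sq_abs]

private lemma znorm_add_le (x y : V d) : znorm (x + y) ≤ znorm x + znorm y := by
  rw [znorm_eq_norm, znorm_eq_norm, znorm_eq_norm]
  have : ce (x + y) = ce x + ce y := by
    ext i; simp [ce]
  rw [this]; exact norm_add_le _ _

private lemma jap_trig (c y : V d) : jap c ≤ jap y + jap (c - y) := by
  have h := znorm_add_le y (c - y)
  have : y + (c - y) = c := by abel
  rw [this] at h
  unfold jap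
  have := znorm_nonneg' y
  linarith

private lemma abs_coord_le (x : V d) (i : Fin d) : |(x i : ℝ)| ≤ znorm x := by
  unfold znorm
  rw [← Real.sqrt_sq_eq_abs]
  apply Real.sqrt_le_sqrt
  exact Finset.single_le_sum (fun j _ => sq_nonneg ((x j : ℝ))) (Finset.mem_univ i)

private lemma count_lemma (N : ℕ) (c : ℝ≥0∞) (f : V d → ℝ≥0∞)
    (h0 : ∀ x, f x ≠ 0 → znorm x ≤ N) (hb : ∀ x, f x ≤ c) :
    ∑' x : V d, f x ≤ ((2 * N + 1 : ℕ) : ℝ≥0∞) ^ d * c := by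
  classical
  set s : Finset (V d) := Fintype.piFinset (fun _ : Fin d => Finset.Icc (-(N : ℤ)) (N : ℤ)) with hs
  have hzero : ∀ x ∉ s, f x = 0 := by
    intro x hx
    by_contra hfx
    apply hx
    rw [hs, Fintype.mem_piFinset]
    intro i
    rw [Finset.mem_Icc]
    have h2 : |(x i : ℝ)| ≤ (N : ℝ) := (abs_coord_le x i).trans (h0 x hfx)
    rw [abs_le] at h2
    constructor
    · exact_mod_cast h2.1
    · exact_mod_cast h2.2
  rw [tsum_eq_sum hzero]
  have hcard : s.card = (2 * N + 1) ^ d := by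
    rw [hs, Fintype.card_piFinset]
    have hc : (Finset.Icc (-(N : ℤ)) (N : ℤ)).card = 2 * N + 1 := by
      rw [Int.card_Icc]; omega
    simp only [hc, Finset.prod_const, Finset.card_univ, Fintype.card_fin]
  calc ∑ x ∈ s, f x ≤ s.card • c := Finset.sum_le_card_nsmul s f c (fun x _ => hb x)
  _ = ((s.card : ℕ) : ℝ≥0∞) * c := nsmul_eq_mul _ _
  _ = ((2 * N + 1 : ℕ) : ℝ≥0∞) ^ d * c := by rw [hcard]; push_cast; ring

private lemma shell_lemma (f : V d → ℝ≥0∞) (c : ℕ → ℝ≥0∞)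
    (h : ∀ (k : ℕ) (x : V d), (2 : ℝ) ^ k ≤ jap x → jap x < (2 : ℝ) ^ (k + 1) → f x ≤ c k) :
    ∑' x : V d, f x ≤ ∑' k : ℕ, (2 : ℝ≥0∞) ^ (3 * d) * ((2 : ℝ≥0∞) ^ d) ^ k * c k := by
  classical
  set g : ℕ → V d → ℝ≥0∞ := fun k x =>
    if (2 : ℝ) ^ k ≤ jap x ∧ jap x < (2 : ℝ) ^ (k + 1) then f x else 0 with hg
  have hfg : ∀ x, f x ≤ ∑' k, g k x := by
    intro x
    have h1 : 1 ≤ jap x := jap_one_le' x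
    set n := ⌊jap x⌋₊ with hn
    have hn1 : 1 ≤ n := Nat.le_floor (by exact_mod_cast h1)
    set k := Nat.log 2 n with hk
    have hlow : (2 : ℝ) ^ k ≤ jap x := by
      have h2 : 2 ^ k ≤ n := Nat.pow_log_le_self 2 (by omega)
      calc (2 : ℝ) ^ k = ((2 ^ k : ℕ) : ℝ) := by push_cast; ring
      _ ≤ (n : ℝ) := by exact_mod_cast h2
      _ ≤ jap x := Nat.floor_le (le_of_lt (jap_pos' x))
    have hhigh : jap x < (2 : ℝ) ^ (k + 1) := by
      have h2 : n + 1 ≤ 2 ^ (k + 1) := Nat.lt_pow_succ_log_self (by norm_num) n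
      have h3 : jap x < (n : ℝ) + 1 := Nat.lt_floor_add_one _
      have h4 : ((n : ℝ) + 1) ≤ ((2 ^ (k + 1) : ℕ) : ℝ) := by exact_mod_cast h2
      have h5 : ((2 ^ (k + 1) : ℕ) : ℝ) = (2 : ℝ) ^ (k + 1) := by push_cast; ring
      linarith
    have hx : f x = g k x := by simp [hg, hlow, hhigh]
    rw [hx]; exact ENNReal.le_tsum k
  calc ∑' x, f x ≤ ∑' x, ∑' k, g k x := ENNReal.tsum_le_tsum hfg
  _ = ∑' k, ∑' x, g k x := ENNReal.tsum_comm
  _ ≤ _ := by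
      apply ENNReal.tsum_le_tsum
      intro k
      have step := count_lemma (2 ^ (k + 1)) (c k) (g k) ?_ ?_
      · refine step.trans ?_
        apply mul_le_mul_left
        have hnat : (2 * 2 ^ (k + 1) + 1 : ℕ) ≤ 2 ^ (k + 3) := by
          have h1 : 1 ≤ 2 ^ k := Nat.one_le_two_pow
          calc 2 * 2 ^ (k + 1) + 1 = 4 * 2 ^ k + 1 := by ring
          _ ≤ 8 * 2 ^ k := by linarith
          _ = 2 ^ (k + 3) := by ring
        calc ((2 * 2 ^ (k + 1) + 1 : ℕ) : ℝ≥0∞) ^ d ≤ ((2 ^ (k + 3) : ℕ) : ℝ≥0∞) ^ d := by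
              exact pow_le_pow_left' (by exact_mod_cast hnat) d
        _ = ((2 : ℝ≥0∞) ^ (k + 3)) ^ d := by push_cast; ring
        _ = (2 : ℝ≥0∞) ^ (3 * d) * ((2 : ℝ≥0∞) ^ d) ^ k := by
              rw [← pow_mul, ← pow_mul, ← pow_add]; congr 1; ring
      · intro x hx
        rw [hg] at hx
        by_cases hc : (2 : ℝ) ^ k ≤ jap x ∧ jap x < (2 : ℝ) ^ (k + 1)
        · have h5 : ((2 ^ (k + 1) : ℕ) : ℝ) = (2 : ℝ) ^ (k + 1) := by push_cast; ring
          have := hc.2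
          have hj : znorm x = jap x - 1 := by unfold jap; ring
          rw [hj, h5]
          have : (1:ℝ) ≤ 2 ^ (k+1) := one_le_pow₀ (by norm_num)
          linarith [hc.2]
        · simp only [if_neg hc] at hx; exact absurd rfl hx
      · intro x
        rw [hg]
        by_cases hc : (2 : ℝ) ^ k ≤ jap x ∧ jap x < (2 : ℝ) ^ (k + 1)
        · simp only [if_pos hc]; exact h k x hc.1 hc.2
        · simp only [if_neg hc]; exact zero_le

private lemma exists_log (R : ℝ) (hR : 1 ≤ R) :
    ∃ K : ℕ, (2 : ℝ) ^ K ≤ R ∧ R < 2 ^ (K + 1) ∧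
      (∀ k : ℕ, (2 : ℝ) ^ k ≤ R → k ≤ K) ∧ (∀ k : ℕ, R < (2 : ℝ) ^ (k + 1) → K ≤ k) := by
  have hR0 : 0 ≤ R := by linarith
  have hfl : 1 ≤ ⌊R⌋₊ := Nat.le_floor (by exact_mod_cast hR)
  have hne : ⌊R⌋₊ ≠ 0 := by omega
  refine ⟨Nat.log 2 ⌊R⌋₊, ?_, ?_, ?_, ?_⟩
  · have h2 : 2 ^ Nat.log 2 ⌊R⌋₊ ≤ ⌊R⌋₊ := Nat.pow_log_le_self 2 hne
    calc (2 : ℝ) ^ Nat.log 2 ⌊R⌋₊ = ((2 ^ Nat.log 2 ⌊R⌋₊ : ℕ) : ℝ) := by push_cast; ring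
    _ ≤ (⌊R⌋₊ : ℝ) := by exact_mod_cast h2
    _ ≤ R := Nat.floor_le hR0
  · have h2 : ⌊R⌋₊ + 1 ≤ 2 ^ (Nat.log 2 ⌊R⌋₊ + 1) := Nat.lt_pow_succ_log_self (by norm_num) _
    have h3 : R < (⌊R⌋₊ : ℝ) + 1 := Nat.lt_floor_add_one _
    have h4 : ((⌊R⌋₊ : ℝ) + 1) ≤ ((2 ^ (Nat.log 2 ⌊R⌋₊ + 1) : ℕ) : ℝ) := by exact_mod_cast h2
    have h5 : ((2 ^ (Nat.log 2 ⌊R⌋₊ + 1) : ℕ) : ℝ) = (2 : ℝ) ^ (Nat.log 2 ⌊R⌋₊ + 1) := by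
      push_cast; ring
    linarith
  · intro k hk
    have h2 : (2 ^ k : ℕ) ≤ ⌊R⌋₊ := Nat.le_floor (by exact_mod_cast hk)
    exact (Nat.le_log_iff_pow_le (by norm_num) hne).mpr h2
  · intro k hk
    by_contra hcon
    push_neg at hcon
    have h2 : k + 1 ≤ Nat.log 2 ⌊R⌋₊ := hcon
    have h3 : (2 : ℝ) ^ (k + 1) ≤ 2 ^ Nat.log 2 ⌊R⌋₊ :=
      pow_le_pow_right₀ (by norm_num) h2
    have h4 : (2 : ℝ) ^ Nat.log 2 ⌊R⌋₊ ≤ R := by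
      have h5 : 2 ^ Nat.log 2 ⌊R⌋₊ ≤ ⌊R⌋₊ := Nat.pow_log_le_self 2 hne
      calc (2 : ℝ) ^ Nat.log 2 ⌊R⌋₊ = ((2 ^ Nat.log 2 ⌊R⌋₊ : ℕ) : ℝ) := by push_cast; ring
      _ ≤ (⌊R⌋₊ : ℝ) := by exact_mod_cast h5
      _ ≤ R := Nat.floor_le hR0
    linarith

private lemma npow_eq_rpow (k : ℕ) : ((2 : ℝ) ^ k) = (2 : ℝ) ^ (k : ℝ) :=
  (Real.rpow_natCast 2 k).symm

private lemma rpow_npow (u : ℝ) (k : ℕ) : ((2 : ℝ) ^ u) ^ k = (2 : ℝ) ^ (u * k) := by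
  rw [← Real.rpow_natCast ((2 : ℝ) ^ u) k, ← Real.rpow_mul (by norm_num : (0:ℝ) ≤ 2)]

private lemma ofReal_two_pow (n : ℕ) : (2 : ℝ≥0∞) ^ n = ENNReal.ofReal ((2 : ℝ) ^ n) := by
  rw [ENNReal.ofReal_pow (by norm_num)]
  norm_num

-- the summand identity: 2^(3d) * (2^d)^k * (2^k)^(-s) = 2^(3d) * (2^(d-s))^k  (reals)
private lemma summand_id (dd : ℕ) (k : ℕ) (s : ℝ) :
    (2:ℝ) ^ (3*dd) * ((2:ℝ) ^ dd) ^ k * ((2:ℝ) ^ k) ^ (-s)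
      = (2:ℝ) ^ (3*dd) * ((2:ℝ) ^ ((dd:ℝ) - s)) ^ k := by
  have h2 : (0:ℝ) < 2 := by norm_num
  have l1 : ((2:ℝ) ^ dd) ^ k = (2:ℝ) ^ ((dd:ℝ) * (k:ℝ)) := by
    rw [← pow_mul, npow_eq_rpow (dd*k)]; congr 1; push_cast; ring
  have l2 : ((2:ℝ) ^ k) ^ (-s) = (2:ℝ) ^ ((k:ℝ) * (-s)) := by
    rw [npow_eq_rpow k, ← Real.rpow_mul h2.le]
  have l3 : ((2:ℝ) ^ ((dd:ℝ) - s)) ^ k = (2:ℝ) ^ (((dd:ℝ) - s) * (k:ℝ)) := rpow_npow _ _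
  rw [l1, l2, l3, mul_assoc, ← Real.rpow_add h2]
  congr 1
  ring

private lemma lemA (hd : 1 ≤ d) {β ε R : ℝ} (hβ0 : 0 ≤ β) (hβd : β ≤ (d : ℝ) - ε)
    (hε : 0 < ε) (hR : 1 ≤ R) :
    ∑' y : V d, (if jap y ≤ R then ENNReal.ofReal (jap y ^ (-β)) else 0)
      ≤ ENNReal.ofReal ((2 : ℝ) ^ (4 * d + 1) * ε⁻¹ * R ^ ((d : ℝ) - β)) := by
  classical
  obtain ⟨K, hK1, hK2, hK3, hK4⟩ := exists_log R hR
  have hR0 : (0:ℝ) < R := by linarith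
  set q : ℝ := (2 : ℝ) ^ ((d : ℝ) - β) with hq
  have hdβ : ε ≤ (d : ℝ) - β := by linarith
  have hq1 : 1 < q := by
    rw [hq]
    apply Real.one_lt_rpow_iff_of_pos (by norm_num) |>.mpr
    left; constructor; norm_num; linarith
  have hq0 : 0 ≤ q := le_trans zero_le_one hq1.le
  have hqd : q ≤ (2:ℝ) ^ (d:ℕ) := by
    rw [hq, npow_eq_rpow]
    exact Real.rpow_le_rpow_of_exponent_le (by norm_num) (by linarith)
  have hqe : ε / 2 ≤ q - 1 := by
    have e1 : (2:ℝ) ^ (ε:ℝ) ≤ q := by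
      rw [hq]; exact Real.rpow_le_rpow_of_exponent_le (by norm_num) hdβ
    have e2 : Real.log 2 * ε + 1 ≤ (2:ℝ) ^ (ε:ℝ) := by
      rw [Real.rpow_def_of_pos (by norm_num : (0:ℝ) < 2)]
      exact Real.add_one_le_exp _
    have e3 : (1:ℝ)/2 ≤ Real.log 2 := by
      have := Real.log_two_gt_d9; linarith
    nlinarith
  set c : ℕ → ℝ≥0∞ := fun k =>
    if (2:ℝ) ^ k ≤ R then ENNReal.ofReal (((2:ℝ) ^ k) ^ (-β)) else 0 with hc
  have hshell : ∀ (k : ℕ) (x : V d), (2 : ℝ) ^ k ≤ jap x → jap x < (2 : ℝ) ^ (k + 1) →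
      (if jap x ≤ R then ENNReal.ofReal (jap x ^ (-β)) else 0) ≤ c k := by
    intro k x hlo hhi
    by_cases hy : jap x ≤ R
    · rw [if_pos hy]
      simp only [hc]
      rw [if_pos (hlo.trans hy)]
      apply ENNReal.ofReal_le_ofReal
      exact Real.rpow_le_rpow_of_nonpos (by positivity) hlo (by linarith)
    · rw [if_neg hy]; exact zero_le
  refine (shell_lemma _ c hshell).trans ?_
  have hout : ∀ k ∉ Finset.range (K + 1),
      (2 : ℝ≥0∞) ^ (3 * d) * ((2 : ℝ≥0∞) ^ d) ^ k * c k = 0 := by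
    intro k hk
    rw [Finset.mem_range, not_lt] at hk
    have : ¬ ((2:ℝ) ^ k ≤ R) := by
      intro hcon
      have := hK3 k hcon
      omega
    simp only [hc]
    simp only [if_neg this, mul_zero]
  rw [tsum_eq_sum hout]
  have hterm : ∀ k ∈ Finset.range (K + 1),
      (2 : ℝ≥0∞) ^ (3 * d) * ((2 : ℝ≥0∞) ^ d) ^ k * c k
        ≤ ENNReal.ofReal ((2:ℝ) ^ (3*d) * q ^ k) := by
    intro k _
    simp only [hc]
    by_cases hcond : (2:ℝ) ^ k ≤ R
    · rw [if_pos hcond]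
      rw [ofReal_two_pow (3*d), ofReal_two_pow d, ← ENNReal.ofReal_pow (by positivity),
        ← ENNReal.ofReal_mul (by positivity), ← ENNReal.ofReal_mul (by positivity)]
      apply ENNReal.ofReal_le_ofReal
      rw [summand_id d k β, hq]
    · rw [if_neg hcond, mul_zero]; exact zero_le
  refine (Finset.sum_le_sum hterm).trans ?_
  rw [← ENNReal.ofReal_sum_of_nonneg (by intro k _; positivity)]
  apply ENNReal.ofReal_le_ofReal
  rw [← Finset.mul_sum]
  have hgeom : ∑ k ∈ Finset.range (K + 1), q ^ k = (q ^ (K+1) - 1) / (q - 1) :=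
    geom_sum_eq (ne_of_gt hq1) (K + 1)
  rw [hgeom]
  have hnum : q ^ (K + 1) - 1 ≤ (2:ℝ) ^ (d:ℕ) * R ^ ((d:ℝ) - β) := by
    have h1 : q ^ K ≤ R ^ ((d:ℝ) - β) := by
      have : q ^ K = ((2:ℝ) ^ K) ^ ((d:ℝ) - β) := by
        rw [hq, rpow_npow, npow_eq_rpow, ← Real.rpow_mul (by norm_num : (0:ℝ) ≤ 2)]
        congr 1; ring
      rw [this]
      exact Real.rpow_le_rpow (by positivity) hK1 (by linarith)
    have h2 : q ^ (K + 1) = q * q ^ K := by ring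
    have h3 : q * q ^ K ≤ (2:ℝ) ^ (d:ℕ) * R ^ ((d:ℝ) - β) := by
      apply mul_le_mul hqd h1 (by positivity) (by positivity)
    nlinarith
  have hden : (0:ℝ) < ε / 2 := by linarith
  have hdiv : (q ^ (K+1) - 1) / (q - 1) ≤ ((2:ℝ) ^ (d:ℕ) * R ^ ((d:ℝ) - β)) / (ε / 2) :=
    div_le_div₀ (by positivity) hnum hden hqe
  refine (mul_le_mul_of_nonneg_left hdiv (by positivity)).trans ?_
  have : (2:ℝ) ^ (3*d) * ((2:ℝ) ^ (d:ℕ) * R ^ ((d:ℝ) - β) / (ε / 2))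
      = (2:ℝ) ^ (4*d+1) * ε⁻¹ * R ^ ((d:ℝ) - β) := by
    field_simp
    ring
  rw [this]


private lemma lemB (hd : 1 ≤ d) {s R : ℝ} (hs1 : (d : ℝ) + 1/2 ≤ s) (hs2 : s ≤ 2 * d)
    (hR : 1 ≤ R) :
    ∑' y : V d, (if R < jap y then ENNReal.ofReal (jap y ^ (-s)) else 0)
      ≤ ENNReal.ofReal ((2 : ℝ) ^ (4 * d + 2) * R ^ ((d : ℝ) - s)) := by
  classical
  obtain ⟨K, hK1, hK2, hK3, hK4⟩ := exists_log R hR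
  have hR0 : (0:ℝ) < R := by linarith
  have h2 : (0:ℝ) < 2 := by norm_num
  set r : ℝ := (2 : ℝ) ^ ((d : ℝ) - s) with hr
  have hr0 : 0 ≤ r := Real.rpow_nonneg (by norm_num) _
  have hrhalf : r ≤ (2:ℝ) ^ (-(1/2) : ℝ) := by
    rw [hr]; exact Real.rpow_le_rpow_of_exponent_le (by norm_num) (by linarith)
  have hr34 : r ≤ 3/4 := by
    refine hrhalf.trans ?_
    have ht2 : ((2:ℝ) ^ ((1/2):ℝ)) ^ (2:ℕ) = 2 := by
      rw [← Real.rpow_natCast ((2:ℝ) ^ ((1/2):ℝ)) 2, ← Real.rpow_mul (by norm_num : (0:ℝ) ≤ 2)]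
      norm_num
    have ht0 : (0:ℝ) ≤ (2:ℝ) ^ ((1/2):ℝ) := Real.rpow_nonneg (by norm_num) _
    have ht43 : (4/3 : ℝ) ≤ (2:ℝ) ^ ((1/2):ℝ) := by nlinarith
    have hh : (2:ℝ) ^ (-(1/2) : ℝ) = ((2:ℝ) ^ ((1/2):ℝ))⁻¹ := Real.rpow_neg (by norm_num) _
    rw [hh, inv_le_comm₀ (by nlinarith) (by norm_num)]
    linarith
  set c : ℕ → ℝ≥0∞ := fun k =>
    if R < (2:ℝ) ^ (k+1) then ENNReal.ofReal (((2:ℝ) ^ k) ^ (-s)) else 0 with hc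
  have hshell : ∀ (k : ℕ) (x : V d), (2 : ℝ) ^ k ≤ jap x → jap x < (2 : ℝ) ^ (k + 1) →
      (if R < jap x then ENNReal.ofReal (jap x ^ (-s)) else 0) ≤ c k := by
    intro k x hlo hhi
    by_cases hy : R < jap x
    · rw [if_pos hy]
      simp only [hc]
      rw [if_pos (lt_of_lt_of_le hy hhi.le)]
      apply ENNReal.ofReal_le_ofReal
      exact Real.rpow_le_rpow_of_nonpos (by positivity) hlo (by linarith)
    · rw [if_neg hy]; exact zero_le
  refine (shell_lemma _ c hshell).trans ?_
  set F : ℕ → ℝ≥0∞ := fun k => (2 : ℝ≥0∞) ^ (3 * d) * ((2 : ℝ≥0∞) ^ d) ^ k * c k with hF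
  have hsplit : ∑' j : ℕ, F (j + K) = ∑' k, F k := by
    apply Function.Injective.tsum_eq (g := fun j => j + K)
    · intro a b hab
      have hab' : a + K = b + K := hab
      omega
    · intro k hk
      rw [Function.mem_support] at hk
      have hcond : R < (2:ℝ) ^ (k+1) := by
        by_contra hcon
        apply hk
        simp only [hF, hc, if_neg hcon, mul_zero]
      have hKk : K ≤ k := hK4 k hcond
      exact ⟨k - K, by show k - K + K = k; omega⟩
  rw [← hsplit]
  have hterm : ∀ j : ℕ, F (j + K)
      ≤ ENNReal.ofReal ((2:ℝ) ^ (3*d) * r ^ K) * (ENNReal.ofReal r) ^ j := by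
    intro j
    simp only [hF, hc]
    by_cases hcond : R < (2:ℝ) ^ (j + K + 1)
    · rw [if_pos hcond]
      rw [ofReal_two_pow (3*d), ofReal_two_pow d, ← ENNReal.ofReal_pow (by positivity),
        ← ENNReal.ofReal_mul (by positivity), ← ENNReal.ofReal_mul (by positivity),
        ← ENNReal.ofReal_pow hr0, ← ENNReal.ofReal_mul (by positivity)]
      apply ENNReal.ofReal_le_ofReal
      rw [summand_id d (j + K) s, hr]
      rw [pow_add]
      apply le_of_eq
      ring
    · rw [if_neg hcond, mul_zero]; exact zero_le
  calc ∑' j, F (j + K) ≤ ∑' j, ENNReal.ofReal ((2:ℝ) ^ (3*d) * r ^ K) * (ENNReal.ofReal r) ^ j :=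
        ENNReal.tsum_le_tsum hterm
  _ = ENNReal.ofReal ((2:ℝ) ^ (3*d) * r ^ K) * ∑' j, (ENNReal.ofReal r) ^ j :=
        ENNReal.tsum_mul_left
  _ = ENNReal.ofReal ((2:ℝ) ^ (3*d) * r ^ K) * (1 - ENNReal.ofReal r)⁻¹ := by
        rw [ENNReal.tsum_geometric]
  _ ≤ ENNReal.ofReal ((2:ℝ) ^ (3*d) * r ^ K) * 4 := by
        apply mul_le_mul_right
        have hle : ENNReal.ofReal r ≤ ENNReal.ofReal (3/4) := ENNReal.ofReal_le_ofReal hr34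
        have h14 : (4:ℝ≥0∞)⁻¹ ≤ 1 - ENNReal.ofReal r := by
          have e1 : (1:ℝ≥0∞) - ENNReal.ofReal (3/4) ≤ 1 - ENNReal.ofReal r :=
            tsub_le_tsub_left hle 1
          have e2 : (1:ℝ≥0∞) - ENNReal.ofReal (3/4) = ENNReal.ofReal (1/4) := by
            rw [← ENNReal.ofReal_one, ← ENNReal.ofReal_sub _ (by norm_num : (0:ℝ) ≤ 3/4)]
            norm_num
          have e3 : ENNReal.ofReal (1/4) = (4:ℝ≥0∞)⁻¹ := by
            rw [one_div, ENNReal.ofReal_inv_of_pos (by norm_num)]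
            simp
          refine le_trans (le_of_eq ?_) e1
          rw [e2, e3]
        calc (1 - ENNReal.ofReal r)⁻¹ ≤ ((4:ℝ≥0∞)⁻¹)⁻¹ := ENNReal.inv_le_inv' h14
        _ = 4 := by simp
  _ ≤ ENNReal.ofReal ((2 : ℝ) ^ (4 * d + 2) * R ^ ((d : ℝ) - s)) := by
        rw [show (4:ℝ≥0∞) = ENNReal.ofReal 4 by norm_num,
          ← ENNReal.ofReal_mul (by positivity)]
        apply ENNReal.ofReal_le_ofReal
        have hrK : r ^ K ≤ R ^ ((d:ℝ) - s) * (2:ℝ) ^ (d:ℕ) := by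
          have e1 : r ^ K = ((2:ℝ) ^ K) ^ ((d:ℝ) - s) := by
            rw [hr, rpow_npow, npow_eq_rpow K, ← Real.rpow_mul h2.le]
            congr 1; ring
          have e2 : R / 2 ≤ (2:ℝ) ^ K := by
            have : (2:ℝ) ^ (K+1) = 2 * 2 ^ K := by ring
            linarith [hK2, this ▸ hK2]
          have e3 : ((2:ℝ) ^ K) ^ ((d:ℝ) - s) ≤ (R/2) ^ ((d:ℝ) - s) :=
            Real.rpow_le_rpow_of_nonpos (by linarith) e2 (by linarith)
          have e4 : (R/2) ^ ((d:ℝ) - s) = R ^ ((d:ℝ) - s) * (2:ℝ) ^ (s - (d:ℝ)) := by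
            rw [Real.div_rpow hR0.le h2.le, div_eq_mul_inv, ← Real.rpow_neg h2.le]
            congr 1
            ring
          have e5 : (2:ℝ) ^ (s - (d:ℝ)) ≤ (2:ℝ) ^ ((d:ℝ)) := by
            apply Real.rpow_le_rpow_of_exponent_le (by norm_num)
            linarith
          have e6 : (2:ℝ) ^ ((d:ℝ)) = (2:ℝ) ^ (d:ℕ) := Real.rpow_natCast 2 d
          calc r ^ K = ((2:ℝ) ^ K) ^ ((d:ℝ) - s) := e1
          _ ≤ (R/2) ^ ((d:ℝ) - s) := e3
          _ = R ^ ((d:ℝ) - s) * (2:ℝ) ^ (s - (d:ℝ)) := e4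
          _ ≤ R ^ ((d:ℝ) - s) * (2:ℝ) ^ (d:ℕ) := by
              rw [← e6]
              exact mul_le_mul_of_nonneg_left e5 (Real.rpow_nonneg hR0.le _)
        calc (2:ℝ) ^ (3*d) * r ^ K * 4 ≤ (2:ℝ) ^ (3*d) * (R ^ ((d:ℝ) - s) * (2:ℝ) ^ (d:ℕ)) * 4 := by
              have := mul_le_mul_of_nonneg_left hrK (by positivity : (0:ℝ) ≤ (2:ℝ) ^ (3*d))
              nlinarith [this]
        _ = (2 : ℝ) ^ (4 * d + 2) * R ^ ((d : ℝ) - s) := by ring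

private lemma oneside (hd : 1 ≤ d) {ε α β : ℝ} (hε : 0 < ε)
    (hα1 : 3 * (d:ℝ) / 4 ≤ α) (hα2 : α ≤ (d:ℝ) - ε)
    (hβ1 : 3 * (d:ℝ) / 4 ≤ β) (hβ2 : β ≤ (d:ℝ) - ε) (c : V d) :
    ∑' y : V d, (if jap y ≤ jap (c - y) then
        ENNReal.ofReal (jap (c - y) ^ (-α) * jap y ^ (-β)) else 0)
      ≤ ENNReal.ofReal ((2:ℝ) ^ (5 * d + 2) * ε⁻¹ * jap c ^ ((d:ℝ) - α - β)) := by
  classical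
  have hd1 : (1:ℝ) ≤ (d:ℝ) := by exact_mod_cast hd
  have hεd : ε ≤ (d:ℝ) / 4 := by linarith
  have hα0 : 0 ≤ α := by linarith
  have hβ0 : 0 ≤ β := by linarith
  set R : ℝ := jap c with hR
  have hR1 : 1 ≤ R := jap_one_le' c
  have hR0 : (0:ℝ) < R := by linarith
  set S : V d → ℝ≥0∞ := fun y => if jap y ≤ jap (c - y) then
      ENNReal.ofReal (jap (c - y) ^ (-α) * jap y ^ (-β)) else 0 with hS
  set Sa : V d → ℝ≥0∞ := fun y => if jap y ≤ jap (c - y) ∧ jap y ≤ R then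
      ENNReal.ofReal (jap (c - y) ^ (-α) * jap y ^ (-β)) else 0 with hSa
  set Sb : V d → ℝ≥0∞ := fun y => if jap y ≤ jap (c - y) ∧ R < jap y then
      ENNReal.ofReal (jap (c - y) ^ (-α) * jap y ^ (-β)) else 0 with hSb
  have hsplit : ∀ y, S y ≤ Sa y + Sb y := by
    intro y
    simp only [hS, hSa, hSb]
    by_cases h1 : jap y ≤ jap (c - y)
    · by_cases h2 : jap y ≤ R
      · rw [if_pos h1, if_pos ⟨h1, h2⟩, if_neg (fun h => absurd h.2 (not_lt.mpr h2))]
        exact le_self_add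
      · rw [if_pos h1, if_neg (fun h => absurd h.2 h2), if_pos ⟨h1, not_le.mp h2⟩]
        exact le_add_self
    · rw [if_neg h1]; exact zero_le
  have hSabound : ∀ y, Sa y ≤ ENNReal.ofReal ((2:ℝ) ^ (d:ℕ) * R ^ (-α)) *
      (if jap y ≤ R then ENNReal.ofReal (jap y ^ (-β)) else 0) := by
    intro y
    simp only [hSa]
    by_cases h : jap y ≤ jap (c - y) ∧ jap y ≤ R
    · rw [if_pos h, if_pos h.2,
        ENNReal.ofReal_mul (Real.rpow_nonneg (jap_pos' _).le _)]
      apply mul_le_mul_left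
      apply ENNReal.ofReal_le_ofReal
      have htri : R ≤ jap y + jap (c - y) := jap_trig c y
      have h2 : R / 2 ≤ jap (c - y) := by linarith [h.1]
      calc jap (c - y) ^ (-α) ≤ (R / 2) ^ (-α) :=
            Real.rpow_le_rpow_of_nonpos (by linarith) h2 (by linarith)
      _ = R ^ (-α) * (2:ℝ) ^ α := by
            rw [Real.div_rpow hR0.le (by norm_num : (0:ℝ) ≤ 2), div_eq_mul_inv,
              ← Real.rpow_neg (by norm_num : (0:ℝ) ≤ 2)]
            congr 2
            ring
      _ ≤ (2:ℝ) ^ (d:ℕ) * R ^ (-α) := by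
            rw [mul_comm]
            apply mul_le_mul_of_nonneg_right _ (Real.rpow_nonneg hR0.le _)
            calc (2:ℝ) ^ α ≤ (2:ℝ) ^ ((d:ℝ)) :=
                  Real.rpow_le_rpow_of_exponent_le (by norm_num) (by linarith)
            _ = (2:ℝ) ^ (d:ℕ) := Real.rpow_natCast 2 d
    · rw [if_neg h]; exact zero_le
  have hSbbound : ∀ y, Sb y ≤
      (if R < jap y then ENNReal.ofReal (jap y ^ (-(α + β))) else 0) := by
    intro y
    simp only [hSb]
    by_cases h : jap y ≤ jap (c - y) ∧ R < jap y
    · rw [if_pos h, if_pos h.2]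
      apply ENNReal.ofReal_le_ofReal
      have e1 : jap (c - y) ^ (-α) ≤ jap y ^ (-α) :=
        Real.rpow_le_rpow_of_nonpos (jap_pos' y) h.1 (by linarith)
      have e2 : jap y ^ (-α) * jap y ^ (-β) = jap y ^ (-(α + β)) := by
        rw [← Real.rpow_add (jap_pos' y)]
        congr 1
        ring
      calc jap (c - y) ^ (-α) * jap y ^ (-β) ≤ jap y ^ (-α) * jap y ^ (-β) :=
            mul_le_mul_of_nonneg_right e1 (Real.rpow_nonneg (jap_pos' y).le _)
      _ = jap y ^ (-(α + β)) := e2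
    · rw [if_neg h]; exact zero_le
  calc ∑' y, S y ≤ ∑' y, (Sa y + Sb y) := ENNReal.tsum_le_tsum hsplit
  _ = ∑' y, Sa y + ∑' y, Sb y := ENNReal.tsum_add
  _ ≤ (ENNReal.ofReal ((2:ℝ) ^ (d:ℕ) * R ^ (-α)) *
        ∑' y : V d, (if jap y ≤ R then ENNReal.ofReal (jap y ^ (-β)) else 0)) +
      ∑' y : V d, (if R < jap y then ENNReal.ofReal (jap y ^ (-(α + β))) else 0) := by
        apply add_le_add
        · refine (ENNReal.tsum_le_tsum hSabound).trans ?_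
          rw [ENNReal.tsum_mul_left]
        · exact ENNReal.tsum_le_tsum hSbbound
  _ ≤ ENNReal.ofReal ((2:ℝ) ^ (d:ℕ) * R ^ (-α)) *
        ENNReal.ofReal ((2 : ℝ) ^ (4 * d + 1) * ε⁻¹ * R ^ ((d : ℝ) - β)) +
      ENNReal.ofReal ((2 : ℝ) ^ (4 * d + 2) * R ^ ((d : ℝ) - (α + β))) := by
        apply add_le_add
        · exact mul_le_mul_right (lemA hd hβ0 hβ2 hε hR1) _
        · apply lemB hd _ _ hR1
          · linarith
          · linarith
  _ ≤ ENNReal.ofReal ((2:ℝ) ^ (5 * d + 1) * ε⁻¹ * R ^ ((d:ℝ) - α - β)) +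
      ENNReal.ofReal ((2:ℝ) ^ (5 * d) * ε⁻¹ * R ^ ((d:ℝ) - α - β)) := by
        apply add_le_add
        · rw [← ENNReal.ofReal_mul (by positivity)]
          apply ENNReal.ofReal_le_ofReal
          have hmul : R ^ (-α) * R ^ ((d:ℝ) - β) = R ^ ((d:ℝ) - α - β) := by
            rw [← Real.rpow_add hR0]
            congr 1
            ring
          have heq : (2:ℝ) ^ (d:ℕ) * R ^ (-α) * ((2:ℝ) ^ (4 * d + 1) * ε⁻¹ * R ^ ((d:ℝ) - β))
              = (2:ℝ) ^ (5 * d + 1) * ε⁻¹ * R ^ ((d:ℝ) - α - β) := by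
            have e0 : (2:ℝ) ^ (d:ℕ) * R ^ (-α) * ((2:ℝ) ^ (4 * d + 1) * ε⁻¹ * R ^ ((d:ℝ) - β))
                = ((2:ℝ) ^ (d:ℕ) * (2:ℝ) ^ (4 * d + 1)) * ε⁻¹ * (R ^ (-α) * R ^ ((d:ℝ) - β)) := by
              ring
            rw [e0, hmul, ← pow_add]
            congr 2
            ring
          rw [heq]
        · apply ENNReal.ofReal_le_ofReal
          have hexp : (d:ℝ) - (α + β) = (d:ℝ) - α - β := by ring
          rw [hexp]
          have hd2 : (d:ℝ) ≤ (2:ℝ) ^ (d:ℕ) := by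
            exact_mod_cast (Nat.lt_two_pow_self (n := d)).le
          have h1ε : 1 ≤ ((d:ℝ) / 4) * ε⁻¹ := by
            rw [← div_eq_mul_inv]
            exact (one_le_div hε).mpr hεd
          have hkey : (2:ℝ) ^ (4 * d + 2) ≤ (2:ℝ) ^ (5 * d) * ε⁻¹ := by
            have e1 : (2:ℝ) ^ (4 * d + 2) * ((d:ℝ) / 4) ≤ (2:ℝ) ^ (5 * d) := by
              have : (2:ℝ) ^ (4 * d + 2) * ((d:ℝ) / 4) = (2:ℝ) ^ (4 * d) * (d:ℝ) := by
                ring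
              rw [this]
              calc (2:ℝ) ^ (4 * d) * (d:ℝ) ≤ (2:ℝ) ^ (4 * d) * (2:ℝ) ^ (d:ℕ) :=
                    mul_le_mul_of_nonneg_left hd2 (by positivity)
              _ = (2:ℝ) ^ (5 * d) := by rw [← pow_add]; congr 1; ring
            nlinarith [mul_le_mul_of_nonneg_left h1ε (by positivity : (0:ℝ) ≤ (2:ℝ) ^ (4 * d + 2)),
              mul_le_mul_of_nonneg_right e1 (by positivity : (0:ℝ) ≤ ε⁻¹)]
          exact mul_le_mul_of_nonneg_right hkey (Real.rpow_nonneg hR0.le _)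
  _ ≤ ENNReal.ofReal ((2:ℝ) ^ (5 * d + 2) * ε⁻¹ * R ^ ((d:ℝ) - α - β)) := by
        rw [← ENNReal.ofReal_add (by positivity) (by positivity)]
        apply ENNReal.ofReal_le_ofReal
        have : (2:ℝ) ^ (5*d+1) + (2:ℝ) ^ (5*d) ≤ (2:ℝ) ^ (5*d+2) := by
          have h1 : (0:ℝ) ≤ (2:ℝ) ^ (5*d) := by positivity
          calc (2:ℝ) ^ (5*d+1) + (2:ℝ) ^ (5*d) = 3 * (2:ℝ) ^ (5*d) := by ring
          _ ≤ 4 * (2:ℝ) ^ (5*d) := by linarith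
          _ = (2:ℝ) ^ (5*d+2) := by ring
        nlinarith [this, Real.rpow_nonneg hR0.le ((d:ℝ) - α - β), inv_nonneg.mpr hε.le,
          mul_le_mul_of_nonneg_right this (by positivity : (0:ℝ) ≤ ε⁻¹ * R ^ ((d:ℝ) - α - β))]

end CPBhelpers

/-- Lemma 2.7: `∑_x ⟨a-x⟩^{-α} ⟨x-b⟩^{-β} ≤ C ε^{-1} ⟨a-b⟩^{-(α+β-d)}`. -/
theorem convolution_of_powers_bound (d : ℕ) (hd : 1 ≤ d) :
    ∃ C : ℝ, 0 < C ∧ ∀ ε : ℝ, 0 < ε → ∀ α β : ℝ,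
      3 * (d : ℝ) / 4 ≤ α → α ≤ (d : ℝ) - ε → 3 * (d : ℝ) / 4 ≤ β → β ≤ (d : ℝ) - ε →
      ∀ a b : V d,
        (∑' x : V d, jap (a - x) ^ (-α) * jap (x - b) ^ (-β)) ≤
          C * ε⁻¹ * jap (a - b) ^ (-(α + β - (d : ℝ))) := by
  classical
  refine ⟨(2:ℝ) ^ (5 * d + 3), by positivity, ?_⟩
  intro ε hε α β hα1 hα2 hβ1 hβ2 a b
  have hj : (0:ℝ) < jap (a - b) := jap_pos' (a - b)
  have hRHS0 : 0 ≤ (2:ℝ) ^ (5 * d + 3) * ε⁻¹ * jap (a - b) ^ (-(α + β - (d:ℝ))) :=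
    mul_nonneg (mul_nonneg (by positivity) (inv_nonneg.mpr hε.le))
      (Real.rpow_nonneg hj.le _)
  have hnn : ∀ x : V d, 0 ≤ jap (a - x) ^ (-α) * jap (x - b) ^ (-β) := fun x =>
    mul_nonneg (Real.rpow_nonneg (jap_pos' _).le _) (Real.rpow_nonneg (jap_pos' _).le _)
  have key : ∑' x : V d, ENNReal.ofReal (jap (a - x) ^ (-α) * jap (x - b) ^ (-β))
      ≤ ENNReal.ofReal ((2:ℝ) ^ (5 * d + 3) * ε⁻¹ * jap (a - b) ^ (-(α + β - (d:ℝ)))) := by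
    set S1 : V d → ℝ≥0∞ := fun y => if jap y ≤ jap ((a - b) - y) then
        ENNReal.ofReal (jap ((a - b) - y) ^ (-α) * jap y ^ (-β)) else 0 with hS1
    set S2 : V d → ℝ≥0∞ := fun y => if jap y ≤ jap ((a - b) - y) then
        ENNReal.ofReal (jap ((a - b) - y) ^ (-β) * jap y ^ (-α)) else 0 with hS2
    have hpt : ∀ x : V d, ENNReal.ofReal (jap (a - x) ^ (-α) * jap (x - b) ^ (-β))
        ≤ S1 (x - b) + S2 (a - x) := by
      intro x
      have e1 : (a - b) - (x - b) = a - x := by abel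
      have e2 : (a - b) - (a - x) = x - b := by abel
      rcases le_total (jap (x - b)) (jap (a - x)) with h | h
      · have heq : S1 (x - b) = ENNReal.ofReal (jap (a - x) ^ (-α) * jap (x - b) ^ (-β)) := by
          simp only [hS1, e1]
          rw [if_pos h]
        rw [← heq]; exact le_self_add
      · have heq : S2 (a - x) = ENNReal.ofReal (jap (a - x) ^ (-α) * jap (x - b) ^ (-β)) := by
          simp only [hS2, e2]
          rw [if_pos h, mul_comm]
        rw [← heq]; exact le_add_self
    calc ∑' x : V d, ENNReal.ofReal (jap (a - x) ^ (-α) * jap (x - b) ^ (-β))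
        ≤ ∑' x : V d, (S1 (x - b) + S2 (a - x)) := ENNReal.tsum_le_tsum hpt
    _ = ∑' x : V d, S1 (x - b) + ∑' x : V d, S2 (a - x) := ENNReal.tsum_add
    _ = ∑' y : V d, S1 y + ∑' y : V d, S2 y := by
        congr 1
        · have h := Equiv.tsum_eq (Equiv.subRight b) S1
          simp only [Equiv.subRight_apply] at h
          exact h
        · have h := Equiv.tsum_eq (Equiv.subLeft a) S2
          simp only [Equiv.subLeft_apply] at h
          exact h
    _ ≤ ENNReal.ofReal ((2:ℝ) ^ (5 * d + 2) * ε⁻¹ * jap (a - b) ^ ((d:ℝ) - α - β)) +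
        ENNReal.ofReal ((2:ℝ) ^ (5 * d + 2) * ε⁻¹ * jap (a - b) ^ ((d:ℝ) - β - α)) :=
        add_le_add (oneside hd hε hα1 hα2 hβ1 hβ2 (a - b))
          (oneside hd hε hβ1 hβ2 hα1 hα2 (a - b))
    _ ≤ ENNReal.ofReal ((2:ℝ) ^ (5 * d + 3) * ε⁻¹ * jap (a - b) ^ (-(α + β - (d:ℝ)))) := by
        rw [← ENNReal.ofReal_add (by positivity) (by positivity)]
        apply ENNReal.ofReal_le_ofReal
        have hexp1 : (d:ℝ) - β - α = (d:ℝ) - α - β := by ring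
        have hexp2 : -(α + β - (d:ℝ)) = (d:ℝ) - α - β := by ring
        rw [hexp1, hexp2]
        have heq : (2:ℝ) ^ (5*d+2) * ε⁻¹ * jap (a - b) ^ ((d:ℝ) - α - β)
            + (2:ℝ) ^ (5*d+2) * ε⁻¹ * jap (a - b) ^ ((d:ℝ) - α - β)
            = (2:ℝ) ^ (5*d+3) * ε⁻¹ * jap (a - b) ^ ((d:ℝ) - α - β) := by ring
        rw [heq]
  by_cases hsum : Summable (fun x : V d => jap (a - x) ^ (-α) * jap (x - b) ^ (-β))
  · have h1 : ENNReal.ofReal (∑' x : V d, jap (a - x) ^ (-α) * jap (x - b) ^ (-β))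
        = ∑' x : V d, ENNReal.ofReal (jap (a - x) ^ (-α) * jap (x - b) ^ (-β)) :=
      ENNReal.ofReal_tsum_of_nonneg hnn hsum
    refine (ENNReal.ofReal_le_ofReal_iff hRHS0).mp ?_
    rw [h1]
    exact key
  · rw [tsum_eq_zero_of_not_summable hsum]
    exact hRHS0
end

section
/- Let n ≥ 2 and m ≥ 1, and let 0 = j_{−1} < j_0 < j_1 < … < j_m < n be integers such that the sets E_l := (j_{l−2}, j_{l−1}) ∩ ℤ and F_l := (j_l, n) ∩ ℤ are nonempty for every 1 ≤ l ≤ m. Then there exists an absolute constant C > 0 and subsets E'_l, F'_l ⊆ (0, n) ∩ ℤ (1 ≤ l ≤ m) such that, for every d ≥ 1, ⋂_{l=1}^m { x̄ ∈ (ℤ^d)^{n−1} : { x_u : u ∈ E_l } ∩ { x_v : v ∈ F_l } = ∅ } = ⋂_{l=1}^m { x̄ ∈ (ℤ^d)^{n−1} : { x_u : u ∈ E'_l } ∩ { x_v : v ∈ F'_l } = ∅ }, and Σ_{l=1}^m (|E'_l| + |F'_l|) ≤ C · n · log(n+1). -/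
open MeasureTheory ProbabilityTheory
open scoped ENNReal NNReal BigOperators

def covFn (js : ℕ → ℕ) : ℕ → ℕ → ℕ → ℕ → ℕ → Finset ℕ × Finset ℕ
  | 0, _, _, _, _ => (∅, ∅)
  | (fuel+1), a, b, N, l =>
    if a ≤ b then
      if l = (a+b)/2 then
        ((Finset.Icc a ((a+b)/2)).biUnion (fun t => Finset.Ioo (js (t-1)) (js t)),
          Finset.Ioo (js ((a+b)/2 + 1)) N)
      else if l < (a+b)/2 then covFn js fuel a ((a+b)/2 - 1) (js ((a+b)/2 + 1) + 1) l
      else covFn js fuel ((a+b)/2 + 1) b N l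
    else (∅, ∅)

lemma covFn_subset (js : ℕ → ℕ) (m : ℕ)
    (hmono : ∀ s t, s < t → t ≤ m + 1 → js s < js t) :
    ∀ fuel a b N l, 1 ≤ a → b ≤ m → js (b+1) < N →
      (covFn js fuel a b N l).1 ⊆ Finset.Ioo 0 N ∧
      (covFn js fuel a b N l).2 ⊆ Finset.Ioo 0 N := by
  have hle : ∀ s t, s ≤ t → t ≤ m + 1 → js s ≤ js t := by
    intro s t hst htm
    rcases eq_or_lt_of_le hst with h | h
    · exact le_of_eq (by rw [h])
    · exact le_of_lt (hmono s t h htm)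
  intro fuel
  induction fuel with
  | zero => intro a b N l _ _ _; simp [covFn]
  | succ fuel ih =>
    intro a b N l ha hb hN
    by_cases hab : a ≤ b
    · have hca : a ≤ (a+b)/2 := by omega
      have hcb : (a+b)/2 ≤ b := by omega
      have hjscN : js ((a+b)/2 + 1) < N :=
        lt_of_le_of_lt (hle ((a+b)/2 + 1) (b+1) (by omega) (by omega)) hN
      by_cases hlc : l = (a+b)/2
      · simp only [covFn, if_pos hab, if_pos hlc]
        constructor
        · intro u hu
          simp only [Finset.mem_biUnion, Finset.mem_Icc, Finset.mem_Ioo] at hu ⊢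
          obtain ⟨t, ht, hu1, hu2⟩ := hu
          have : js t < js (b+1) := hmono t (b+1) (by omega) (by omega)
          omega
        · intro v hv
          simp only [Finset.mem_Ioo] at hv ⊢
          omega
      · by_cases hlt : l < (a+b)/2
        · simp only [covFn, if_pos hab, if_neg hlc, if_pos hlt]
          have hrec := ih a ((a+b)/2 - 1) (js ((a+b)/2 + 1) + 1) l ha (by omega)
            (by
              rw [show (a+b)/2 - 1 + 1 = (a+b)/2 by omega]
              have := hmono ((a+b)/2) ((a+b)/2 + 1) (by omega) (by omega)
              omega)
          have hsub : Finset.Ioo 0 (js ((a+b)/2 + 1) + 1) ⊆ Finset.Ioo 0 N :=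
            Finset.Ioo_subset_Ioo_right (by omega)
          exact ⟨hrec.1.trans hsub, hrec.2.trans hsub⟩
        · simp only [covFn, if_pos hab, if_neg hlc, if_neg hlt]
          exact ih ((a+b)/2 + 1) b N l (by omega) hb hN
    · simp [covFn, hab]

lemma covFn_exact (js : ℕ → ℕ) (m : ℕ)
    (hmono : ∀ s t, s < t → t ≤ m + 1 → js s < js t) :
    ∀ fuel a b N, b + 1 - a ≤ fuel → 1 ≤ a → b ≤ m → js (b+1) < N →
      ∀ u v,
        (∃ l, l ∈ Finset.Icc a b ∧ u ∈ (covFn js fuel a b N l).1 ∧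
            v ∈ (covFn js fuel a b N l).2)
        ↔ (∃ l, l ∈ Finset.Icc a b ∧ u ∈ Finset.Ioo (js (l-1)) (js l) ∧
            v ∈ Finset.Ioo (js (l+1)) N) := by
  have hle : ∀ s t, s ≤ t → t ≤ m + 1 → js s ≤ js t := by
    intro s t hst htm
    rcases eq_or_lt_of_le hst with h | h
    · exact le_of_eq (by rw [h])
    · exact le_of_lt (hmono s t h htm)
  intro fuel
  induction fuel with
  | zero =>
    intro a b N hfuel ha hb hN u v
    have h : Finset.Icc a b = ∅ := Finset.Icc_eq_empty (by omega)
    simp [h]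
  | succ fuel ih =>
    intro a b N hfuel ha hb hN u v
    by_cases hab : a ≤ b
    · set c := (a+b)/2 with hc
      have hca : a ≤ c := by omega
      have hcb : c ≤ b := by omega
      have hc1 : 1 ≤ c := by omega
      have hjscc : js c < js (c+1) := hmono c (c+1) (by omega) (by omega)
      have hjscN : js (c+1) < N :=
        lt_of_le_of_lt (hle (c+1) (b+1) (by omega) (by omega)) hN
      have heqc : covFn js (fuel+1) a b N c =
          ((Finset.Icc a c).biUnion (fun t => Finset.Ioo (js (t-1)) (js t)),
            Finset.Ioo (js (c + 1)) N) := by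
        simp [covFn, hab, ← hc]
      have heqL : ∀ l, l < c → covFn js (fuel+1) a b N l =
          covFn js fuel a (c - 1) (js (c + 1) + 1) l := by
        intro l hl
        simp only [covFn, if_pos hab, ← hc, if_neg (by omega : ¬ l = c), if_pos hl]
      have heqR : ∀ l, c < l → covFn js (fuel+1) a b N l =
          covFn js fuel (c + 1) b N l := by
        intro l hl
        simp only [covFn, if_pos hab, ← hc, if_neg (by omega : ¬ l = c),
          if_neg (by omega : ¬ l < c)]
      have hL := ih a (c-1) (js (c+1) + 1) (by omega) ha (by omega)
        (by rw [show c - 1 + 1 = c by omega]; omega)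
      have hR := ih (c+1) b N (by omega) (by omega) hb hN
      constructor
      · rintro ⟨l, hl, hu, hv⟩
        simp only [Finset.mem_Icc] at hl
        by_cases hlc : l = c
        · rw [hlc, heqc] at hu hv
          simp only [Finset.mem_biUnion, Finset.mem_Icc, Finset.mem_Ioo] at hu hv
          obtain ⟨t, ht, hu1, hu2⟩ := hu
          have : js (t+1) ≤ js (c+1) := hle (t+1) (c+1) (by omega) (by omega)
          exact ⟨t, Finset.mem_Icc.mpr (by omega), Finset.mem_Ioo.mpr (by omega),
            Finset.mem_Ioo.mpr (by omega)⟩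
        · by_cases hlt : l < c
          · rw [heqL l hlt] at hu hv
            obtain ⟨l', hl', hu', hv'⟩ := (hL u v).mp
              ⟨l, Finset.mem_Icc.mpr (by omega), hu, hv⟩
            simp only [Finset.mem_Icc] at hl'
            simp only [Finset.mem_Ioo] at hv'
            exact ⟨l', Finset.mem_Icc.mpr (by omega), hu',
              Finset.mem_Ioo.mpr (by omega)⟩
          · have hgt : c < l := by omega
            rw [heqR l hgt] at hu hv
            obtain ⟨l', hl', hu', hv'⟩ := (hR u v).mp
              ⟨l, Finset.mem_Icc.mpr (by omega), hu, hv⟩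
            simp only [Finset.mem_Icc] at hl'
            exact ⟨l', Finset.mem_Icc.mpr (by omega), hu', hv'⟩
      · rintro ⟨l, hl, hu, hv⟩
        simp only [Finset.mem_Icc] at hl
        simp only [Finset.mem_Ioo] at hu hv
        by_cases hlc : c < l
        · obtain ⟨l', hl', hu', hv'⟩ := (hR u v).mpr
            ⟨l, Finset.mem_Icc.mpr (by omega), Finset.mem_Ioo.mpr hu,
              Finset.mem_Ioo.mpr hv⟩
          simp only [Finset.mem_Icc] at hl'
          refine ⟨l', Finset.mem_Icc.mpr (by omega), ?_, ?_⟩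
          · rw [heqR l' (by omega)]; exact hu'
          · rw [heqR l' (by omega)]; exact hv'
        · by_cases hvc : js (c+1) < v
          · refine ⟨c, Finset.mem_Icc.mpr (by omega), ?_, ?_⟩
            · rw [heqc]
              simp only [Finset.mem_biUnion, Finset.mem_Icc, Finset.mem_Ioo]
              exact ⟨l, ⟨hl.1, by omega⟩, hu⟩
            · rw [heqc]
              exact Finset.mem_Ioo.mpr (by omega)
          · have hlltc : l < c := by
              by_contra hcon
              have hlc' : l = c := by omega
              rw [hlc'] at hv
              omega
            obtain ⟨l', hl', hu', hv'⟩ := (hL u v).mpr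
              ⟨l, Finset.mem_Icc.mpr (by omega), Finset.mem_Ioo.mpr hu,
                Finset.mem_Ioo.mpr (by omega)⟩
            simp only [Finset.mem_Icc] at hl'
            refine ⟨l', Finset.mem_Icc.mpr (by omega), ?_, ?_⟩
            · rw [heqL l' (by omega)]; exact hu'
            · rw [heqL l' (by omega)]; exact hv'
    · have h : Finset.Icc a b = ∅ := Finset.Icc_eq_empty (by omega)
      simp [h]

lemma covFn_card (js : ℕ → ℕ) (m : ℕ)
    (hmono : ∀ s t, s < t → t ≤ m + 1 → js s < js t) :
    ∀ fuel a b N, b + 1 - a ≤ fuel → 1 ≤ a → a ≤ b + 1 → b ≤ m → js (b+1) < N →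
      ((∑ l ∈ Finset.Icc a b,
          ((covFn js fuel a b N l).1.card + (covFn js fuel a b N l).2.card) : ℕ) : ℤ)
        ≤ ((Nat.log 2 (b+1-a) : ℤ) + 1) *
            ((js b : ℤ) - (js (a-1) : ℤ) + (N : ℤ) - 1 - (js a : ℤ)) := by
  have hle : ∀ s t, s ≤ t → t ≤ m + 1 → js s ≤ js t := by
    intro s t hst htm
    rcases eq_or_lt_of_le hst with h | h
    · exact le_of_eq (by rw [h])
    · exact le_of_lt (hmono s t h htm)
  intro fuel
  induction fuel with
  | zero =>
    intro a b N hfuel ha hab1 hb hN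
    have ha' : a = b + 1 := by omega
    subst ha'
    have h : Finset.Icc (b+1) b = ∅ := Finset.Icc_eq_empty (by omega)
    rw [h]
    simp only [Finset.sum_empty, Nat.cast_zero, Nat.add_sub_cancel]
    have h1 : (js (b+1) : ℤ) < N := by exact_mod_cast hN
    have h2 : (js b : ℤ) = (js (b + 1 - 1) : ℤ) := by norm_num
    apply mul_nonneg
    · positivity
    · omega
  | succ fuel ih =>
    intro a b N hfuel ha hab1 hb hN
    by_cases hab : a ≤ b
    swap
    · have ha' : a = b + 1 := by omega
      subst ha'
      have h : Finset.Icc (b+1) b = ∅ := Finset.Icc_eq_empty (by omega)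
      rw [h]
      simp only [Finset.sum_empty, Nat.cast_zero, Nat.add_sub_cancel]
      have h1 : (js (b+1) : ℤ) < N := by exact_mod_cast hN
      have h2 : (js b : ℤ) = (js (b + 1 - 1) : ℤ) := by norm_num
      apply mul_nonneg
      · positivity
      · omega
    · set c := (a+b)/2 with hc
      have hca : a ≤ c := by omega
      have hcb : c ≤ b := by omega
      have hc1 : 1 ≤ c := by omega
      have hjscc : js c < js (c+1) := hmono c (c+1) (by omega) (by omega)
      have hjscN : js (c+1) < N :=
        lt_of_le_of_lt (hle (c+1) (b+1) (by omega) (by omega)) hN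
      have heqc : covFn js (fuel+1) a b N c =
          ((Finset.Icc a c).biUnion (fun t => Finset.Ioo (js (t-1)) (js t)),
            Finset.Ioo (js (c + 1)) N) := by
        simp [covFn, hab, ← hc]
      have heqL : ∀ l, l < c → covFn js (fuel+1) a b N l =
          covFn js fuel a (c - 1) (js (c + 1) + 1) l := by
        intro l hl
        simp only [covFn, if_pos hab, ← hc, if_neg (by omega : ¬ l = c), if_pos hl]
      have heqR : ∀ l, c < l → covFn js (fuel+1) a b N l =
          covFn js fuel (c + 1) b N l := by
        intro l hl
        simp only [covFn, if_pos hab, ← hc, if_neg (by omega : ¬ l = c),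
          if_neg (by omega : ¬ l < c)]
      -- split the sum
      have hsetsplit : Finset.Icc a b =
          Finset.Icc a (c-1) ∪ insert c (Finset.Icc (c+1) b) := by
        ext x
        simp only [Finset.mem_Icc, Finset.mem_union, Finset.mem_insert]
        omega
      have hdisj : Disjoint (Finset.Icc a (c-1)) (insert c (Finset.Icc (c+1) b)) := by
        rw [Finset.disjoint_left]
        intro x hx hx'
        simp only [Finset.mem_Icc, Finset.mem_insert] at hx hx'
        omega
      have hcnot : c ∉ Finset.Icc (c+1) b := by
        simp only [Finset.mem_Icc]; omega
      rw [hsetsplit, Finset.sum_union hdisj, Finset.sum_insert hcnot]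
      have hLsum : ∀ l ∈ Finset.Icc a (c-1),
          (covFn js (fuel+1) a b N l).1.card + (covFn js (fuel+1) a b N l).2.card =
          (covFn js fuel a (c-1) (js (c+1)+1) l).1.card +
            (covFn js fuel a (c-1) (js (c+1)+1) l).2.card := by
        intro l hl
        simp only [Finset.mem_Icc] at hl
        rw [heqL l (by omega)]
      have hRsum : ∀ l ∈ Finset.Icc (c+1) b,
          (covFn js (fuel+1) a b N l).1.card + (covFn js (fuel+1) a b N l).2.card =
          (covFn js fuel (c+1) b N l).1.card + (covFn js fuel (c+1) b N l).2.card := by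
        intro l hl
        simp only [Finset.mem_Icc] at hl
        rw [heqR l (by omega)]
      rw [Finset.sum_congr rfl hLsum, Finset.sum_congr rfl hRsum, heqc]
      -- rectangle card bounds
      have hEsub : (Finset.Icc a c).biUnion (fun t => Finset.Ioo (js (t-1)) (js t)) ⊆
          Finset.Ioo (js (a-1)) (js c) := by
        intro u hu
        simp only [Finset.mem_biUnion, Finset.mem_Icc, Finset.mem_Ioo] at hu ⊢
        obtain ⟨t, ht, hu1, hu2⟩ := hu
        have h1 : js (a-1) ≤ js (t-1) := hle (a-1) (t-1) (by omega) (by omega)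
        have h2 : js t ≤ js c := hle t c (by omega) (by omega)
        omega
      have hjac : js (a-1) < js c := hmono (a-1) c (by omega) (by omega)
      have hE : (((Finset.Icc a c).biUnion
          (fun t => Finset.Ioo (js (t-1)) (js t))).card : ℤ) ≤
          (js c : ℤ) - (js (a-1) : ℤ) - 1 := by
        have h := Finset.card_le_card hEsub
        rw [Nat.card_Ioo] at h
        omega
      have hF : (((Finset.Ioo (js (c+1)) N).card : ℤ)) ≤ (N : ℤ) - (js (c+1) : ℤ) - 1 := by
        rw [Nat.card_Ioo]
        omega
      -- IH for the two halves
      have hIL := ih a (c-1) (js (c+1) + 1) (by omega) ha (by omega) (by omega)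
        (by rw [show c - 1 + 1 = c by omega]; omega)
      rw [show c - 1 + 1 = c by omega] at hIL
      have hIR := ih (c+1) b N (by omega) (by omega) (by omega) hb hN
      rw [show c + 1 - 1 = c by omega] at hIR
      -- basic monotonicity facts
      have hjab : js (a-1) ≤ js (c-1) := hle (a-1) (c-1) (by omega) (by omega)
      have hjac1 : js a < js (c+1) := hmono a (c+1) (by omega) (by omega)
      have hjcb : js c ≤ js b := hle c b (by omega) (by omega)
      have hjc1c : js (c-1) < js c := hmono (c-1) c (by omega) (by omega)
      have hjaab : js a ≤ js b := hle a b (by omega) (by omega)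
      -- log bounds
      set D : ℤ := (Nat.log 2 (b+1-a) : ℤ) + 1 with hD
      have hD1 : 1 ≤ D := by
        have : (0:ℤ) ≤ (Nat.log 2 (b+1-a) : ℤ) := by positivity
        omega
      have hlogL : ((Nat.log 2 (c-a) : ℤ) + 1 ≤ D - 1) ∨ a = c := by
        by_cases hac : a = c
        · right; exact hac
        · left
          have hk2 : 2 ≤ b + 1 - a := by omega
          have h1 : Nat.log 2 (c-a) ≤ Nat.log 2 ((b+1-a)/2) :=
            Nat.log_mono_right (by omega)
          have h2 : Nat.log 2 ((b+1-a)/2) = Nat.log 2 (b+1-a) - 1 :=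
            Nat.log_div_base 2 (b+1-a)
          have h3 : 0 < Nat.log 2 (b+1-a) := Nat.log_pos (by norm_num) hk2
          rw [hD]
          omega
      have hlogR : ((Nat.log 2 (b+1-(c+1)) : ℤ) + 1 ≤ D - 1) ∨ c = b := by
        by_cases hcb' : c = b
        · right; exact hcb'
        · left
          have hk2 : 2 ≤ b + 1 - a := by omega
          have h1 : Nat.log 2 (b+1-(c+1)) ≤ Nat.log 2 ((b+1-a)/2) :=
            Nat.log_mono_right (by omega)
          have h2 : Nat.log 2 ((b+1-a)/2) = Nat.log 2 (b+1-a) - 1 :=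
            Nat.log_div_base 2 (b+1-a)
          have h3 : 0 < Nat.log 2 (b+1-a) := Nat.log_pos (by norm_num) hk2
          rw [hD]
          omega
      set XL : ℤ := (js (c-1) : ℤ) - (js (a-1) : ℤ) + ((js (c+1) : ℤ) + 1) - 1 - (js a : ℤ)
        with hXL
      set XR : ℤ := (js b : ℤ) - (js c : ℤ) + (N : ℤ) - 1 - (js (c+1) : ℤ) with hXR
      set X : ℤ := (js b : ℤ) - (js (a-1) : ℤ) + (N : ℤ) - 1 - (js a : ℤ) with hX
      have hXL0 : 0 ≤ XL := by rw [hXL]; omega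
      have hXR0 : 0 ≤ XR := by
        rw [hXR]
        have : (js (c+1) : ℤ) < N := by exact_mod_cast hjscN
        omega
      have hXsum : XL + XR ≤ X - 1 := by rw [hXL, hXR, hX]; omega
      -- bound the left sum
      have hLfinal : ((∑ l ∈ Finset.Icc a (c-1),
          ((covFn js fuel a (c-1) (js (c+1)+1) l).1.card +
            (covFn js fuel a (c-1) (js (c+1)+1) l).2.card) : ℕ) : ℤ) ≤ (D - 1) * XL := by
        rcases hlogL with h | h
        · refine le_trans hIL ?_
          have hbr : ((js (c-1) : ℤ) - (js (a-1) : ℤ) + ((js (c+1) + 1 : ℕ) : ℤ) - 1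
              - (js a : ℤ)) = XL := by
            rw [hXL]; push_cast; ring
          rw [hbr]
          exact mul_le_mul_of_nonneg_right h hXL0
        · have hempty : Finset.Icc a (c-1) = ∅ := Finset.Icc_eq_empty (by omega)
          rw [hempty]
          simp only [Finset.sum_empty, Nat.cast_zero]
          exact mul_nonneg (by omega) hXL0
      have hRfinal : ((∑ l ∈ Finset.Icc (c+1) b,
          ((covFn js fuel (c+1) b N l).1.card +
            (covFn js fuel (c+1) b N l).2.card) : ℕ) : ℤ) ≤ (D - 1) * XR := by
        rcases hlogR with h | h
        · exact le_trans hIR (mul_le_mul_of_nonneg_right h hXR0)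
        · have hempty : Finset.Icc (c+1) b = ∅ := Finset.Icc_eq_empty (by omega)
          rw [hempty]
          simp only [Finset.sum_empty, Nat.cast_zero]
          exact mul_nonneg (by omega) hXR0
      -- combine
      have hrect : (((Finset.Icc a c).biUnion
            (fun t => Finset.Ioo (js (t-1)) (js t))).card : ℤ) +
          ((Finset.Ioo (js (c+1)) N).card : ℤ) ≤ X - 1 := by
        rw [hX]
        have : (js (c+1) : ℤ) ≥ (js c : ℤ) := by exact_mod_cast le_of_lt hjscc
        omega
      have hdist : (D-1)*XL + (D-1)*XR = (D-1)*(XL+XR) := by ring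
      have hmul : (D-1)*(XL+XR) ≤ (D-1)*(X-1) :=
        mul_le_mul_of_nonneg_left hXsum (by omega)
      have hDX : D * X = (X - 1) + ((D-1)*(X-1)) + D := by ring
      push_cast [-Nat.cast_sum]
      linarith [hLfinal, hRfinal, hrect, hdist, hmul, hDX, hD1]

/-- Lemma 4.4: the disjointness conditions determined by the index sets
`E_l = (j_{l-2}, j_{l-1}) ∩ ℤ` and `F_l = (j_l, n) ∩ ℤ` can be rewritten using index sets
`E'_l, F'_l` of total cardinality `O(n log n)`.  Here `js (t+1)` plays the role of `j_t`
(so `js 0 = j_{-1} = 0`). -/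
theorem efficient_disjointness_encoding :
    ∃ C : ℝ, 0 < C ∧ ∀ n m : ℕ, 2 ≤ n → 1 ≤ m →
      ∀ js : ℕ → ℕ, js 0 = 0 → (∀ t, t ≤ m → js t < js (t + 1)) → js (m + 1) < n →
      (∀ l, 1 ≤ l → l ≤ m →
        (Finset.Ioo (js (l - 1)) (js l)).Nonempty ∧
          (Finset.Ioo (js (l + 1)) n).Nonempty) →
      ∃ E' F' : ℕ → Finset ℕ,
        (∀ l, 1 ≤ l → l ≤ m → E' l ⊆ Finset.Ioo 0 n ∧ F' l ⊆ Finset.Ioo 0 n) ∧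
        (∀ d : ℕ, 1 ≤ d →
          (⋂ l ∈ Finset.Icc 1 m,
              { y : Fin (n - 1) → V d |
                ∀ u ∈ Finset.Ioo (js (l - 1)) (js l), ∀ v ∈ Finset.Ioo (js (l + 1)) n,
                  pathVal n y u ≠ pathVal n y v }) =
            ⋂ l ∈ Finset.Icc 1 m,
              { y : Fin (n - 1) → V d |
                ∀ u ∈ E' l, ∀ v ∈ F' l, pathVal n y u ≠ pathVal n y v }) ∧
        ((∑ l ∈ Finset.Icc 1 m, ((E' l).card + (F' l).card) : ℕ) : ℝ) ≤
          C * n * Real.log (n + 1) := by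
  refine ⟨6, by norm_num, ?_⟩
  intro n m hn hm js hjs0 hjsmono hjsn _hne
  -- strict monotonicity of `js` on `[0, m+1]`
  have hmono : ∀ s t, s < t → t ≤ m + 1 → js s < js t := by
    have key : ∀ t, t ≤ m + 1 → ∀ s, s < t → js s < js t := by
      intro t
      induction t with
      | zero => intro _ s hs; omega
      | succ t iht =>
        intro ht s hs
        have h1 : js t < js (t+1) := hjsmono t (by omega)
        rcases Nat.lt_or_ge s t with h | h
        · exact lt_trans (iht (by omega) s h) h1
        · have : s = t := by omega
          rw [this]; exact h1
    intro s t hst htm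
    exact key t htm s hst
  have hle : ∀ s t, s ≤ t → t ≤ m + 1 → js s ≤ js t := by
    intro s t hst htm
    rcases eq_or_lt_of_le hst with h | h
    · exact le_of_eq (by rw [h])
    · exact le_of_lt (hmono s t h htm)
  -- `js t ≥ t` and consequences
  have hjtge : ∀ t, t ≤ m + 1 → t ≤ js t := by
    intro t
    induction t with
    | zero => intro _; omega
    | succ t iht =>
      intro ht
      have h1 : js t < js (t+1) := hjsmono t (by omega)
      have h2 := iht (by omega)
      omega
  have hmn : m + 1 < n := lt_of_le_of_lt (hjtge (m+1) le_rfl) hjsn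
  refine ⟨fun l => (covFn js m 1 m n l).1, fun l => (covFn js m 1 m n l).2, ?_, ?_, ?_⟩
  · -- subsets of `Ioo 0 n`
    intro l _ _
    exact covFn_subset js m hmono m 1 m n l le_rfl le_rfl hjsn
  · -- equality of the intersections
    intro d _
    have hpairs := covFn_exact js m hmono m 1 m n (by omega) le_rfl le_rfl hjsn
    ext y
    simp only [Set.mem_iInter, Set.mem_setOf_eq]
    constructor
    · intro h l hl u hu v hv
      obtain ⟨l', hl', hu', hv'⟩ := (hpairs u v).mp ⟨l, hl, hu, hv⟩
      exact h l' hl' u hu' v hv'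
    · intro h l hl u hu v hv
      obtain ⟨l', hl', hu', hv'⟩ := (hpairs u v).mpr ⟨l, hl, hu, hv⟩
      exact h l' hl' u hu' v hv'
  · -- cardinality bound
    have hcard := covFn_card js m hmono m 1 m n (by omega) le_rfl (by omega) le_rfl hjsn
    rw [show m + 1 - 1 = m by omega, show (1:ℕ) - 1 = 0 by omega, hjs0] at hcard
    have hjsm : js m < n := lt_trans (hmono m (m+1) (by omega) (by omega)) hjsn
    have hjs1 : 1 ≤ js 1 := by
      have h := hjsmono 0 (by omega)
      rw [hjs0, Nat.zero_add] at h
      omega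
    -- integer bound: sum ≤ (log₂ m + 1) * (2n)
    have hZ : ((∑ l ∈ Finset.Icc 1 m,
        ((covFn js m 1 m n l).1.card + (covFn js m 1 m n l).2.card) : ℕ) : ℤ) ≤
        ((Nat.log 2 m : ℤ) + 1) * (2 * n) := by
      refine le_trans hcard ?_
      have hbr : (js m : ℤ) - (0 : ℕ) + (n : ℤ) - 1 - (js 1 : ℤ) ≤ 2 * n := by
        have h1 : (js m : ℤ) < n := by exact_mod_cast hjsm
        have h2 : (1 : ℤ) ≤ (js 1 : ℤ) := by exact_mod_cast hjs1
        push_cast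
        omega
      have hpos : (0:ℤ) ≤ (Nat.log 2 m : ℤ) + 1 := by positivity
      exact mul_le_mul_of_nonneg_left hbr hpos
    -- pass to the reals
    have hR : ((∑ l ∈ Finset.Icc 1 m,
        ((covFn js m 1 m n l).1.card + (covFn js m 1 m n l).2.card) : ℕ) : ℝ) ≤
        ((Nat.log 2 m : ℝ) + 1) * (2 * n) := by
      exact_mod_cast hZ
    refine le_trans hR ?_
    -- real-log estimates
    have hmln : m ≤ n := by omega
    have hlogmn : (Nat.log 2 m : ℝ) ≤ (Nat.log 2 n : ℝ) := by
      exact_mod_cast Nat.log_mono_right hmln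
    have hpowle : ((2:ℝ) ^ (Nat.log 2 n)) ≤ (n : ℝ) := by
      exact_mod_cast Nat.pow_log_le_self 2 (by omega : n ≠ 0)
    have hlog2pos : (0:ℝ) < Real.log 2 := Real.log_pos (by norm_num)
    have hlogpow : (Nat.log 2 n : ℝ) * Real.log 2 ≤ Real.log n := by
      have := Real.log_le_log (by positivity) hpowle
      rwa [Real.log_pow] at this
    have hloghalf : (1/2 : ℝ) ≤ Real.log 2 := by
      have := Real.log_two_gt_d9
      linarith
    have hlognn1 : Real.log n ≤ Real.log ((n:ℝ) + 1) := by
      apply Real.log_le_log (by positivity)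
      linarith
    have hlogn2 : (Nat.log 2 n : ℝ) ≤ 2 * Real.log ((n:ℝ) + 1) := by
      have h0 : (0:ℝ) ≤ (Nat.log 2 n : ℝ) := by positivity
      nlinarith [hlogpow, hloghalf, hlognn1]
    have h1log : (1:ℝ) ≤ Real.log ((n:ℝ) + 1) := by
      have h3 : Real.exp 1 ≤ (n:ℝ) + 1 := by
        have h4 := Real.exp_one_lt_d9
        have h5 : (2:ℝ) ≤ (n:ℝ) := by exact_mod_cast hn
        linarith
      calc (1:ℝ) = Real.log (Real.exp 1) := (Real.log_exp 1).symm
        _ ≤ Real.log ((n:ℝ) + 1) := Real.log_le_log (Real.exp_pos 1) h3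
    have hnpos : (0:ℝ) ≤ (n:ℝ) := by positivity
    calc ((Nat.log 2 m : ℝ) + 1) * (2 * n)
        ≤ (3 * Real.log ((n:ℝ) + 1)) * (2 * n) := by
          apply mul_le_mul_of_nonneg_right _ (by positivity)
          linarith [hlogmn, hlogn2, h1log]
      _ = 6 * (n:ℝ) * Real.log ((n:ℝ) + 1) := by ring
end
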